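/- arXiv:2405.04330 — 3 statements merged into one kernel-verified Lean document; each statement's English description precedes it below -/
import Mathlib

section
/- Let A = [B C] ∈ ℝ^{m×n} with k + 1 ≤ min(m,n), where B ∈ ℝ^{m×k} is the matrix of the first k columns of A and has rank k, let Q1 ∈ ℝ^{m×k} have orthonormal columns spanning the column space of B, let A_k = Q1·Q1ᵀ·A, and let B⁺ = (BᵀB)⁻¹Bᵀ. Suppose that for some μ, ν ≥ 1: (1) σ_k(A) ≤ μ·σ_k(B); (2) ‖A − A_k‖₂ ≤ μ·σ_{k+1}(A); and (3) ‖B⁺C‖_max ≤ ν. Then B is a near-local maximum volume m×k submatrix of A with parameter γ ≤ √(ν² + μ⁴): for every B̂ obtained from B by replacing one column of B with a column of C, vol(B̂) ≤ √(ν² + μ⁴)·vol(B). -/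
open Matrix

/-- The spectral norm (`‖·‖₂`, largest singular value) of a real matrix. -/
noncomputable def specNorm {m n : Type*} [Fintype m] [Fintype n] [DecidableEq n]
    (A : Matrix m n ℝ) : ℝ :=
  ‖LinearMap.toContinuousLinearMap (Matrix.toEuclideanLin A)‖

/-- `sval A j` is the `j`-th largest singular value of `A` (1-indexed), characterized as the
distance, in the spectral norm, from `A` to the set of matrices of rank `< j`. -/
noncomputable def sval {m n : Type*} [Fintype m] [Fintype n] [DecidableEq n]
    (A : Matrix m n ℝ) (j : ℕ) : ℝ :=
  sInf {x : ℝ | ∃ B : Matrix m n ℝ, B.rank < j ∧ x = specNorm (A - B)}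

/-- The volume of a matrix: the product of its singular values. -/
noncomputable def vol {m n : Type*} [Fintype m] [Fintype n] [DecidableEq n]
    (A : Matrix m n ℝ) : ℝ :=
  ∏ j ∈ Finset.Icc 1 (min (Fintype.card m) (Fintype.card n)), sval A j

/-- `DiffOne b r` : `r` is an injective selection of indices whose image (index set)
differs from the index set selected by `b` in at most one element. -/
def DiffOne {ι α : Type*} [Fintype ι] [DecidableEq α] (b r : ι → α) : Prop :=
  Function.Injective r ∧ (Finset.univ.image r \ Finset.univ.image b).card ≤ 1


variable {m n : Type*} [Fintype m] [Fintype n] [DecidableEq n]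

lemma specNorm_nonneg (A : Matrix m n ℝ) : 0 ≤ specNorm A := norm_nonneg _

lemma norm_equiv_symm (v : m → ℝ) :
    ‖(WithLp.equiv 2 (m → ℝ)).symm v‖ = Real.sqrt (v ⬝ᵥ v) := by
  rw [EuclideanSpace.norm_eq]
  congr 1
  simp [dotProduct, Real.norm_eq_abs, sq_abs, pow_two]

lemma dot_self_nonneg (v : m → ℝ) : 0 ≤ v ⬝ᵥ v :=
  Finset.sum_nonneg fun i _ => mul_self_nonneg _

lemma sqrt_dot_mulVec_le (A : Matrix m n ℝ) (x : n → ℝ) :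
    Real.sqrt ((A *ᵥ x) ⬝ᵥ (A *ᵥ x)) ≤ specNorm A * Real.sqrt (x ⬝ᵥ x) := by
  have := (LinearMap.toContinuousLinearMap (Matrix.toEuclideanLin A)).le_opNorm
    ((WithLp.equiv 2 (n → ℝ)).symm x)
  rw [← norm_equiv_symm, ← norm_equiv_symm]
  exact this

lemma dot_mulVec_le (A : Matrix m n ℝ) (x : n → ℝ) :
    (A *ᵥ x) ⬝ᵥ (A *ᵥ x) ≤ specNorm A ^ 2 * (x ⬝ᵥ x) := by
  have h := sqrt_dot_mulVec_le A x
  have h1 : 0 ≤ specNorm A * Real.sqrt (x ⬝ᵥ x) :=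
    mul_nonneg (specNorm_nonneg A) (Real.sqrt_nonneg _)
  nlinarith [Real.sq_sqrt (dot_self_nonneg (A *ᵥ x)), Real.sq_sqrt (dot_self_nonneg x),
    Real.sqrt_nonneg ((A *ᵥ x) ⬝ᵥ (A *ᵥ x))]

lemma specNorm_le_of_forall (A : Matrix m n ℝ) (c : ℝ) (hc : 0 ≤ c)
    (h : ∀ x : n → ℝ, (A *ᵥ x) ⬝ᵥ (A *ᵥ x) ≤ c ^ 2 * (x ⬝ᵥ x)) : specNorm A ≤ c := by
  apply ContinuousLinearMap.opNorm_le_bound _ hc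
  intro x
  have hx := h ((WithLp.equiv 2 (n → ℝ)) x)
  have hxe : (WithLp.equiv 2 (n → ℝ)).symm ((WithLp.equiv 2 (n → ℝ)) x) = x := by simp
  calc ‖(LinearMap.toContinuousLinearMap (Matrix.toEuclideanLin A)) x‖
      = Real.sqrt ((A *ᵥ (WithLp.equiv 2 (n → ℝ)) x) ⬝ᵥ (A *ᵥ (WithLp.equiv 2 (n → ℝ)) x)) := by
        rw [← norm_equiv_symm]
        congr 1
    _ ≤ Real.sqrt (c ^ 2 * ((WithLp.equiv 2 (n → ℝ)) x ⬝ᵥ (WithLp.equiv 2 (n → ℝ)) x)) :=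
        Real.sqrt_le_sqrt hx
    _ = c * ‖x‖ := by
        rw [Real.sqrt_mul (sq_nonneg c), Real.sqrt_sq hc]
        congr 1
        rw [← norm_equiv_symm, hxe]

lemma le_specNorm_of (A : Matrix m n ℝ) (x : n → ℝ) (hx : x ⬝ᵥ x = 1) :
    Real.sqrt ((A *ᵥ x) ⬝ᵥ (A *ᵥ x)) ≤ specNorm A := by
  have := sqrt_dot_mulVec_le A x
  rwa [hx, Real.sqrt_one, mul_one] at this

lemma sval_set_nonempty (A : Matrix m n ℝ) {j : ℕ} (hj : 1 ≤ j) :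
    {x : ℝ | ∃ B : Matrix m n ℝ, B.rank < j ∧ x = specNorm (A - B)}.Nonempty :=
  ⟨specNorm (A - 0), 0, by simpa [Matrix.rank_zero] using (show 0 < j from hj), rfl⟩

lemma sval_set_bddBelow (A : Matrix m n ℝ) (j : ℕ) :
    BddBelow {x : ℝ | ∃ B : Matrix m n ℝ, B.rank < j ∧ x = specNorm (A - B)} :=
  ⟨0, fun x ⟨B, _, hx⟩ => hx ▸ specNorm_nonneg _⟩

lemma sval_nonneg (A : Matrix m n ℝ) (j : ℕ) : 0 ≤ sval A j :=
  Real.sInf_nonneg (fun x ⟨B, _, hx⟩ => hx ▸ specNorm_nonneg _)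

lemma sval_succ_le (A : Matrix m n ℝ) {j : ℕ} (hj : 1 ≤ j) : sval A (j + 1) ≤ sval A j := by
  apply csInf_le_csInf (sval_set_bddBelow A _) (sval_set_nonempty A hj)
  rintro x ⟨B, hB, hx⟩
  exact ⟨B, hB.trans (Nat.lt_succ_self _), hx⟩

lemma sval_le_of_rank_lt (A B : Matrix m n ℝ) {j : ℕ} (hB : B.rank < j) :
    sval A j ≤ specNorm (A - B) :=
  csInf_le (sval_set_bddBelow A j) ⟨B, hB, rfl⟩

lemma le_sval (A : Matrix m n ℝ) {j : ℕ} (hj : 1 ≤ j) (c : ℝ)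
    (h : ∀ B : Matrix m n ℝ, B.rank < j → c ≤ specNorm (A - B)) : c ≤ sval A j := by
  apply le_csInf (sval_set_nonempty A hj)
  rintro x ⟨B, hB, hx⟩
  exact hx ▸ h B hB


lemma realCT {a b : Type*} (A : Matrix a b ℝ) : Aᴴ = Aᵀ := by
  ext i j; simp [conjTranspose_apply]

section
variable {k : ℕ} {m : Type*} [Fintype m] (M : Matrix m (Fin k) ℝ)

noncomputable def eigU : Matrix (Fin k) (Fin k) ℝ :=
  ((isHermitian_conjTranspose_mul_self M).eigenvectorUnitary : Matrix (Fin k) (Fin k) ℝ)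

noncomputable def eigL : Fin k → ℝ := (isHermitian_conjTranspose_mul_self M).eigenvalues

lemma eigL_nonneg (i : Fin k) : 0 ≤ eigL M i :=
  eigenvalues_conjTranspose_mul_self_nonneg M i

lemma eigU_mul_transpose : eigU M * (eigU M)ᵀ = 1 := by
  have := (Matrix.mem_unitaryGroup_iff).mp
    ((isHermitian_conjTranspose_mul_self M).eigenvectorUnitary).2
  rw [star_eq_conjTranspose] at this
  rw [show (eigU M)ᵀ = (eigU M)ᴴ from (realCT _).symm]
  exact this

lemma transpose_mul_eigU : (eigU M)ᵀ * eigU M = 1 := by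
  have := (Matrix.mem_unitaryGroup_iff').mp
    ((isHermitian_conjTranspose_mul_self M).eigenvectorUnitary).2
  rw [star_eq_conjTranspose] at this
  rw [show (eigU M)ᵀ = (eigU M)ᴴ from (realCT _).symm]
  exact this

lemma spectral : Mᴴ * M = eigU M * diagonal (eigL M) * (eigU M)ᵀ := by
  have := (isHermitian_conjTranspose_mul_self M).spectral_theorem
  rw [Unitary.conjStarAlgAut_apply, star_eq_conjTranspose] at this
  rw [show (eigU M)ᵀ = (eigU M)ᴴ from (realCT _).symm,
    show diagonal (eigL M) = diagonal (RCLike.ofReal ∘ (isHermitian_conjTranspose_mul_self M).eigenvalues) from rfl]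
  exact this
lemma dot_diag (d y : Fin k → ℝ) : y ⬝ᵥ (diagonal d *ᵥ y) = ∑ i, d i * y i ^ 2 := by
  simp [dotProduct, mulVec_diagonal]
  apply Finset.sum_congr rfl
  intro i _
  ring

lemma quadForm_eq (x : Fin k → ℝ) :
    x ⬝ᵥ ((Mᴴ * M) *ᵥ x) = ∑ i, eigL M i * ((eigU M)ᵀ *ᵥ x) i ^ 2 := by
  rw [spectral M, ← dot_diag]
  rw [← mulVec_mulVec, ← mulVec_mulVec, dotProduct_mulVec x, ← mulVec_transpose]

lemma parseval (x : Fin k → ℝ) :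
    x ⬝ᵥ x = ((eigU M)ᵀ *ᵥ x) ⬝ᵥ ((eigU M)ᵀ *ᵥ x) := by
  conv_rhs => rw [dotProduct_mulVec, vecMul_transpose, mulVec_mulVec,
    eigU_mul_transpose, one_mulVec]

lemma mulVec_dot_self (x : Fin k → ℝ) :
    (M *ᵥ x) ⬝ᵥ (M *ᵥ x) = x ⬝ᵥ ((Mᴴ * M) *ᵥ x) := by
  rw [realCT, ← mulVec_mulVec, dotProduct_mulVec x, vecMul_transpose]

lemma sval_le_sqrt [DecidableEq m] (S : Finset (Fin k)) (c : ℝ) (hc : 0 ≤ c)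
    (hout : ∀ i ∉ S, eigL M i ≤ c ^ 2) : sval M (S.card + 1) ≤ c := by
  classical
  set U := eigU M with hU
  set d' : Fin k → ℝ := fun i => if i ∈ S then 1 else 0 with hd'
  set d : Fin k → ℝ := fun i => if i ∈ S then 0 else 1 with hd
  set N := M * (U * diagonal d' * Uᵀ) with hN
  have hrank : N.rank < S.card + 1 := by
    have h1 : N.rank ≤ (U * diagonal d' * Uᵀ).rank := rank_mul_le_right _ _
    have h2 : (U * diagonal d' * Uᵀ).rank ≤ (diagonal d' * Uᵀ).rank := by
      rw [mul_assoc]; exact rank_mul_le_right _ _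
    have h3 : (diagonal d' * Uᵀ).rank ≤ (diagonal d').rank := rank_mul_le_left _ _
    have h4 : (diagonal d').rank = S.card := by
      rw [rank_diagonal]
      rw [Fintype.card_subtype]
      congr 1
      ext i
      simp only [Finset.mem_filter, Finset.mem_univ, true_and, hd']
      by_cases hi : i ∈ S <;> simp [hi]
    omega
  have hsub : M - N = M * (U * diagonal d * Uᵀ) := by
    have hdd : diagonal d' + diagonal d = 1 := by
      ext i j
      rcases eq_or_ne i j with rfl | hij
      · by_cases hi : i ∈ S <;> simp [diagonal_apply, hd, hd', hi, one_apply]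
      · simp [diagonal_apply_ne _ hij, one_apply_ne hij]
    have hone : U * diagonal d' * Uᵀ + U * diagonal d * Uᵀ = 1 := by
      rw [mul_assoc, mul_assoc, ← Matrix.mul_add, ← Matrix.add_mul, hdd, Matrix.one_mul,
        eigU_mul_transpose]
    have hsplit : M * (U * diagonal d' * Uᵀ) + M * (U * diagonal d * Uᵀ) = M := by
      rw [← Matrix.mul_add, hone, Matrix.mul_one]
    rw [sub_eq_iff_eq_add, hN]
    conv_lhs => rw [← hsplit]
    abel
  refine le_trans (sval_le_of_rank_lt M N hrank) ?_
  rw [hsub]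
  apply specNorm_le_of_forall _ c hc
  intro x
  set y := Uᵀ *ᵥ x with hy
  have hPx : Uᵀ *ᵥ ((U * diagonal d * Uᵀ) *ᵥ x) = diagonal d *ᵥ y := by
    rw [mulVec_mulVec, ← mul_assoc, ← mul_assoc, transpose_mul_eigU, Matrix.one_mul,
      ← mulVec_mulVec]
  have key : ((M * (U * diagonal d * Uᵀ)) *ᵥ x) ⬝ᵥ ((M * (U * diagonal d * Uᵀ)) *ᵥ x)
      = ∑ i, eigL M i * (diagonal d *ᵥ y) i ^ 2 := by
    rw [← mulVec_mulVec, mulVec_dot_self, quadForm_eq, hPx]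
  rw [key]
  have hpar : x ⬝ᵥ x = ∑ i, y i ^ 2 := by
    rw [parseval M x, ← hy]
    simp [dotProduct, pow_two]
  rw [hpar, Finset.mul_sum]
  apply Finset.sum_le_sum
  intro i _
  rw [mulVec_diagonal]
  by_cases hi : i ∈ S
  · simp only [hd, hi, if_true, if_pos]
    simp [hi, hd]
    positivity
  · simp only [hd, hi, if_neg hi]
    have := hout i hi
    have h0 := eigL_nonneg M i
    have : eigL M i * (1 * y i) ^ 2 ≤ c ^ 2 * y i ^ 2 := by nlinarith [sq_nonneg (y i)]
    simpa using this

lemma sqrt_le_sval [DecidableEq m] (S : Finset (Fin k)) (hS : S.Nonempty) (c : ℝ) (hc : 0 ≤ c)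
    (hin : ∀ i ∈ S, c ^ 2 ≤ eigL M i) : c ≤ sval M S.card := by
  classical
  have hS1 : 1 ≤ S.card := hS.card_pos
  apply le_sval M hS1 c
  intro N hNrank
  set U := eigU M with hU
  set J : Matrix (Fin k) {s // s ∈ S} ℝ := fun i s => if (s : Fin k) = i then 1 else 0 with hJ
  set N'' := N * U * J with hN''
  -- kernel of N'' is nontrivial
  have hcard : Fintype.card {s // s ∈ S} = S.card := Fintype.card_coe S
  have hrank'' : N''.rank < S.card := by
    have h1 : N''.rank ≤ (N * U).rank := rank_mul_le_left _ _
    have h2 : (N * U).rank ≤ N.rank := rank_mul_le_left _ _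
    omega
  obtain ⟨z, hz, hz0⟩ : ∃ z : {s // s ∈ S} → ℝ, N''.mulVecLin z = 0 ∧ z ≠ 0 := by
    have hrn := LinearMap.finrank_range_add_finrank_ker (N''.mulVecLin)
    have hdom : Module.finrank ℝ ({s // s ∈ S} → ℝ) = S.card := by
      rw [Module.finrank_pi]; exact hcard
    have hrange : Module.finrank ℝ (LinearMap.range N''.mulVecLin) = N''.rank := rfl
    have hker : 0 < Module.finrank ℝ (LinearMap.ker N''.mulVecLin) := by omega
    rw [Module.finrank_pos_iff] at hker
    obtain ⟨⟨z, hz⟩, hzz⟩ := exists_ne (0 : LinearMap.ker N''.mulVecLin)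
    refine ⟨z, LinearMap.mem_ker.mp hz, fun h => hzz ?_⟩
    exact Subtype.ext (by simpa using h)
  set zt := J *ᵥ z with hzt
  have hzt_supp : ∀ i ∉ S, zt i = 0 := by
    intro i hi
    rw [hzt]
    simp only [mulVec, dotProduct, hJ]
    apply Finset.sum_eq_zero
    intro s _
    have : (s : Fin k) ≠ i := fun h => hi (h ▸ s.2)
    simp [this]
  have hzt_apply : ∀ s : {s // s ∈ S}, zt (s : Fin k) = z s := by
    intro s
    rw [hzt]
    simp only [mulVec, dotProduct, hJ]
    rw [Finset.sum_eq_single s]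
    · simp
    · intro s' _ hne
      have : (s' : Fin k) ≠ (s : Fin k) := fun h => hne (Subtype.ext h)
      simp [this]
    · simp
  have hzt_ne : zt ≠ 0 := by
    intro h
    apply hz0
    funext s
    have := hzt_apply s
    rw [h] at this
    simpa using this.symm
  set x := U *ᵥ zt with hx
  have hNx : N *ᵥ x = 0 := by
    have h5 : N'' *ᵥ z = 0 := hz
    calc N *ᵥ x = (N * U * J) *ᵥ z := by rw [hx, mulVec_mulVec, hzt, mulVec_mulVec]
    _ = 0 := h5
  have hyx : Uᵀ *ᵥ x = zt := by
    rw [hx, mulVec_mulVec, transpose_mul_eigU, one_mulVec]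
  have hquad : ((M - N) *ᵥ x) ⬝ᵥ ((M - N) *ᵥ x) = ∑ i, eigL M i * zt i ^ 2 := by
    rw [Matrix.sub_mulVec, hNx, sub_zero, mulVec_dot_self, quadForm_eq, hyx]
  have hxx : x ⬝ᵥ x = ∑ i, zt i ^ 2 := by
    rw [parseval M x, hyx]
    simp [dotProduct, pow_two]
  have hlb : c ^ 2 * (x ⬝ᵥ x) ≤ ((M - N) *ᵥ x) ⬝ᵥ ((M - N) *ᵥ x) := by
    rw [hquad, hxx, Finset.mul_sum]
    apply Finset.sum_le_sum
    intro i _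
    by_cases hi : i ∈ S
    · have := hin i hi
      nlinarith [sq_nonneg (zt i)]
    · rw [hzt_supp i hi]
      simp
  have hxxpos : 0 < x ⬝ᵥ x := by
    rw [hxx]
    have h0 : ∀ i, 0 ≤ zt i ^ 2 := fun i => sq_nonneg _
    obtain ⟨i, hi⟩ : ∃ i, zt i ≠ 0 := Function.ne_iff.mp hzt_ne
    exact Finset.sum_pos' (fun i _ => h0 i) ⟨i, Finset.mem_univ i, by positivity⟩
  have hspec := sqrt_dot_mulVec_le (M - N) x
  have h1 : c * Real.sqrt (x ⬝ᵥ x) ≤ Real.sqrt (((M - N) *ᵥ x) ⬝ᵥ ((M - N) *ᵥ x)) := by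
    rw [show c * Real.sqrt (x ⬝ᵥ x) = Real.sqrt (c ^ 2 * (x ⬝ᵥ x)) by
      rw [Real.sqrt_mul (sq_nonneg c), Real.sqrt_sq hc]]
    exact Real.sqrt_le_sqrt hlb
  have h2 : 0 < Real.sqrt (x ⬝ᵥ x) := Real.sqrt_pos.mpr hxxpos
  exact le_of_mul_le_mul_right (le_trans h1 hspec) h2


noncomputable def sortPerm : Equiv.Perm (Fin k) := Tuple.sort (fun i => - eigL M i)

noncomputable def sEig : Fin k → ℝ := fun j => eigL M (sortPerm M j)

lemma sEig_antitone : Antitone (sEig M) := by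
  intro a b hab
  have := Tuple.monotone_sort (fun i => - eigL M i) hab
  simpa [sEig, sortPerm] using this

lemma sEig_nonneg (j : Fin k) : 0 ≤ sEig M j := eigL_nonneg M _

theorem sval_eq_sEig [DecidableEq m] (j : Fin k) :
    sval M (j.1 + 1) = Real.sqrt (sEig M j) := by
  classical
  set e := sortPerm M with he
  apply le_antisymm
  · set S := (Finset.Iio j).image e with hS
    have hcard : S.card = j.1 := by
      rw [hS, Finset.card_image_of_injective _ e.injective, Fin.card_Iio]
    have hout : ∀ i ∉ S, eigL M i ≤ Real.sqrt (sEig M j) ^ 2 := by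
      intro i hi
      rw [Real.sq_sqrt (sEig_nonneg M j)]
      have ha : e.symm i ∉ Finset.Iio j := by
        intro h
        exact hi (hS ▸ Finset.mem_image.mpr ⟨e.symm i, h, e.apply_symm_apply i⟩)
      have hja : j ≤ e.symm i := by simpa using ha
      have := sEig_antitone M hja
      simpa [sEig, he, e.apply_symm_apply] using this
    have := sval_le_sqrt M S (Real.sqrt (sEig M j)) (Real.sqrt_nonneg _) hout
    rwa [hcard] at this
  · set S := (Finset.Iic j).image e with hS
    have hcard : S.card = j.1 + 1 := by
      rw [hS, Finset.card_image_of_injective _ e.injective, Fin.card_Iic]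
    have hne : S.Nonempty := by
      refine ⟨e j, hS ▸ Finset.mem_image.mpr ⟨j, by simp, rfl⟩⟩
    have hin : ∀ i ∈ S, Real.sqrt (sEig M j) ^ 2 ≤ eigL M i := by
      intro i hi
      rw [Real.sq_sqrt (sEig_nonneg M j)]
      rw [hS, Finset.mem_image] at hi
      obtain ⟨a, ha, rfl⟩ := hi
      have haj : a ≤ j := by simpa using ha
      exact sEig_antitone M haj
    have := sqrt_le_sval M S hne (Real.sqrt (sEig M j)) (Real.sqrt_nonneg _) hin
    rwa [hcard] at this

lemma eigL_eq_sEig (i : Fin k) : eigL M i = sEig M ((sortPerm M).symm i) := by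
  simp [sEig]

lemma eigL_ge_last (hk : 0 < k) (i : Fin k) : sEig M ⟨k - 1, by omega⟩ ≤ eigL M i := by
  rw [eigL_eq_sEig]
  apply sEig_antitone
  rw [Fin.le_def]
  simp only [Fin.val_mk]
  have := (((sortPerm M).symm i)).isLt
  omega

lemma quadForm_ge (hk : 0 < k) (x : Fin k → ℝ) :
    sEig M ⟨k - 1, by omega⟩ * (x ⬝ᵥ x) ≤ x ⬝ᵥ ((Mᴴ * M) *ᵥ x) := by
  rw [quadForm_eq, parseval M x]
  set y := (eigU M)ᵀ *ᵥ x with hy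
  have h1 : y ⬝ᵥ y = ∑ i, y i ^ 2 := by simp [dotProduct, pow_two]
  rw [h1, Finset.mul_sum]
  apply Finset.sum_le_sum
  intro i _
  exact mul_le_mul_of_nonneg_right (eigL_ge_last M hk i) (sq_nonneg _)

lemma det_transpose_mul_self_eq_prod : det (Mᵀ * M) = ∏ i, eigL M i := by
  have h2 := (isHermitian_conjTranspose_mul_self M).det_eq_prod_eigenvalues
  rw [show (Mᵀ) = Mᴴ from (realCT M).symm]
  simpa [eigL] using h2

end

lemma sqrt_prod {ι : Type*} (s : Finset ι) (f : ι → ℝ) (h : ∀ i ∈ s, 0 ≤ f i) :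
    ∏ i ∈ s, Real.sqrt (f i) = Real.sqrt (∏ i ∈ s, f i) := by
  classical
  induction s using Finset.cons_induction with
  | empty => simp
  | cons a s ha ih =>
    rw [Finset.prod_cons, Finset.prod_cons, ih (fun i hi => h i (Finset.mem_cons_of_mem hi)),
      ← Real.sqrt_mul (h a (Finset.mem_cons_self a s))]

theorem vol_eq_sqrt_det {m' k : ℕ} (hk : k ≤ m') (M : Matrix (Fin m') (Fin k) ℝ) :
    vol M = Real.sqrt (det (Mᵀ * M)) := by
  classical
  have hmin : min (Fintype.card (Fin m')) (Fintype.card (Fin k)) = k := by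
    simp [Fintype.card_fin, hk]
  have himage : Finset.Icc 1 k = Finset.image (fun i : Fin k => i.1 + 1) Finset.univ := by
    ext a
    simp only [Finset.mem_Icc, Finset.mem_image, Finset.mem_univ, true_and]
    constructor
    · rintro ⟨h1, h2⟩
      exact ⟨⟨a - 1, by omega⟩, by simp; omega⟩
    · rintro ⟨i, rfl⟩
      exact ⟨by omega, by omega⟩
  rw [vol, hmin, himage, Finset.prod_image (by intro a _ b _ h; exact Fin.ext (by have h' : a.1 + 1 = b.1 + 1 := h; omega))]
  have : ∀ i : Fin k, sval M (i.1 + 1) = Real.sqrt (sEig M i) := sval_eq_sEig M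
  rw [Finset.prod_congr rfl (fun i _ => this i), sqrt_prod _ _ (fun i _ => sEig_nonneg M i)]
  congr 1
  have h1 : ∏ i : Fin k, sEig M i = ∏ i : Fin k, eigL M i := Equiv.prod_comp (sortPerm M) (eigL M)
  rw [h1]
  have h2 := (isHermitian_conjTranspose_mul_self M).det_eq_prod_eigenvalues
  rw [show (Mᵀ) = Mᴴ from (realCT M).symm]
  simpa [eigL] using h2.symm

section Cof
variable {n : Type*} [Fintype n] [DecidableEq n]

lemma det_updateRow_single_eq (A : Matrix n n ℝ) (i₀ : n) :
    det (A.updateRow i₀ (Pi.single i₀ 1)) =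
    det ((A.updateCol i₀ (Pi.single i₀ 1)).updateRow i₀ (Pi.single i₀ 1)) := by
  set A' := A.updateRow i₀ (Pi.single i₀ 1) with hA'
  have hcol : A' = A'.updateCol i₀
      (Pi.single i₀ (1:ℝ) + fun a => if a = i₀ then 0 else A a i₀) := by
    ext a b
    by_cases hb : b = i₀ <;> by_cases ha : a = i₀ <;>
      simp [A', updateCol_apply, updateRow_apply, ha, hb, Pi.single_apply]
  conv_lhs => rw [hcol]
  rw [det_updateCol_add]
  have h0 : det (A'.updateCol i₀ (fun a => if a = i₀ then 0 else A a i₀)) = 0 := by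
    apply det_eq_zero_of_row_eq_zero i₀
    intro b
    by_cases hb : b = i₀ <;>
      simp [A', updateCol_apply, updateRow_apply, hb, Pi.single_apply]
  rw [h0, add_zero]
  have heq : A'.updateCol i₀ (Pi.single i₀ 1)
      = (A.updateCol i₀ (Pi.single i₀ 1)).updateRow i₀ (Pi.single i₀ 1) := by
    ext a b
    by_cases ha : a = i₀
    · by_cases hb : b = i₀ <;>
        simp [A', updateRow_apply, updateCol_apply, ha, hb, Pi.single_apply]
    · by_cases hb : b = i₀ <;>
        simp [A', updateRow_apply, updateCol_apply, ha, hb, Pi.single_apply]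
  rw [heq]

/-- Two matrices agreeing off row/column `i₀` have equal `(i₀,i₀)` cofactors. -/
lemma det_updateRow_single_congr {A B : Matrix n n ℝ} {i₀ : n}
    (h : ∀ a b, a ≠ i₀ → b ≠ i₀ → A a b = B a b) :
    det (A.updateRow i₀ (Pi.single i₀ 1)) = det (B.updateRow i₀ (Pi.single i₀ 1)) := by
  rw [det_updateRow_single_eq A i₀, det_updateRow_single_eq B i₀]
  have heq : (A.updateCol i₀ (Pi.single i₀ 1)).updateRow i₀ (Pi.single i₀ 1)
      = (B.updateCol i₀ (Pi.single i₀ 1)).updateRow i₀ (Pi.single i₀ 1) := by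
    ext a b
    by_cases ha : a = i₀
    · simp [updateRow_apply, ha]
    · by_cases hb : b = i₀
      · simp [updateRow_apply, updateCol_apply, ha, hb, Pi.single_apply]
      · simp [updateRow_apply, updateCol_apply, ha, hb, h a b ha hb]
  rw [heq]

end Cof

set_option maxHeartbeats 2000000 in
theorem statement_13 {m k n' : ℕ} (hm : k + 1 ≤ m) (hn : 1 ≤ n')
    (B : Matrix (Fin m) (Fin k) ℝ) (C : Matrix (Fin m) (Fin n') ℝ)
    (hrank : B.rank = k)
    (Q1 : Matrix (Fin m) (Fin k) ℝ)
    (hQ : Q1ᵀ * Q1 = 1)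
    (hspan : LinearMap.range Q1.mulVecLin = LinearMap.range B.mulVecLin)
    (μ ν : ℝ) (hμ : 1 ≤ μ) (hν : 1 ≤ ν)
    (h1 : sval (Matrix.fromCols B C) k ≤ μ * sval B k)
    (h2 : specNorm (Matrix.fromCols B C - Q1 * Q1ᵀ * Matrix.fromCols B C) ≤
      μ * sval (Matrix.fromCols B C) (k + 1))
    (h3 : ∀ i j, |((Bᵀ * B)⁻¹ * Bᵀ * C) i j| ≤ ν) :
    ∀ (i₀ : Fin k) (t : Fin n'),
      vol ((Matrix.fromCols B C).submatrix id
        (Function.update (Sum.inl : Fin k → Fin k ⊕ Fin n') i₀ (Sum.inr t))) ≤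
      Real.sqrt (ν ^ 2 + μ ^ 4) * vol B := by
  intro i₀ t
  classical
  have hk : 0 < k := i₀.pos
  have hkm : k ≤ m := by omega
  set A := Matrix.fromCols B C with hA
  set Bhat := A.submatrix id
    (Function.update (Sum.inl : Fin k → Fin k ⊕ Fin n') i₀ (Sum.inr t)) with hBhatdef
  set G := Bᵀ * B with hGdef
  -- B has trivial kernel
  have hBker : ∀ x : Fin k → ℝ, B *ᵥ x = 0 → x = 0 := by
    intro x hx
    have hrn := LinearMap.finrank_range_add_finrank_ker B.mulVecLin
    have hdom : Module.finrank ℝ (Fin k → ℝ) = k := by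
      rw [Module.finrank_pi]; exact Fintype.card_fin k
    have hr : Module.finrank ℝ (LinearMap.range B.mulVecLin) = k := hrank
    have hker0 : Module.finrank ℝ (LinearMap.ker B.mulVecLin) = 0 := by omega
    have hbot : LinearMap.ker B.mulVecLin = ⊥ := Submodule.finrank_eq_zero.mp hker0
    have : x ∈ LinearMap.ker B.mulVecLin := by simpa [LinearMap.mem_ker, mulVecLin_apply] using hx
    rw [hbot] at this
    simpa using this
  -- det G ≠ 0
  have hdetG_ne : det G ≠ 0 := by
    intro hdet
    obtain ⟨v, hvne, hv⟩ := (Matrix.exists_mulVec_eq_zero_iff).mpr hdet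
    have hq : (B *ᵥ v) ⬝ᵥ (B *ᵥ v) = 0 := by
      rw [mulVec_dot_self, realCT, ← hGdef, hv, dotProduct_zero]
    have : B *ᵥ v = 0 := by
      have := (dotProduct_self_eq_zero (v := B *ᵥ v)).mp hq
      exact this
    exact hvne (hBker v this)
  have hGinv : G * G⁻¹ = 1 := mul_nonsing_inv _ (isUnit_iff_ne_zero.mpr hdetG_ne)
  have hdetprod : det G = ∏ i, eigL B i := by
    rw [hGdef]; exact det_transpose_mul_self_eq_prod B
  have heigpos : ∀ i, 0 < eigL B i := by
    intro i
    rcases lt_or_eq_of_le (eigL_nonneg B i) with h | h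
    · exact h
    · exfalso; apply hdetG_ne
      rw [hdetprod]
      exact Finset.prod_eq_zero (Finset.mem_univ i) h.symm
  have hdetGpos : 0 < det G := by
    rw [hdetprod]; exact Finset.prod_pos (fun i _ => heigpos i)
  set lmin := sEig B ⟨k - 1, by omega⟩ with hlmindef
  have hlmin_pos : 0 < lmin := heigpos _
  have hsvalBk : sval B k = Real.sqrt lmin := by
    have h5 := sval_eq_sEig B ⟨k - 1, by omega⟩
    rw [show ((⟨k - 1, by omega⟩ : Fin k) : ℕ) + 1 = k by simp; omega] at h5
    exact h5
  -- the replacement column data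
  set ct : Fin m → ℝ := fun i => C i t with hct
  set w : Fin k → ℝ := fun i => ((Bᵀ * B)⁻¹ * Bᵀ * C) i t with hwdef
  have hwvec : w = (G⁻¹ * Bᵀ) *ᵥ ct := by
    funext i
    rw [hwdef]
    simp [mul_apply, mulVec, dotProduct, hct, hGdef]
  have hGw : G *ᵥ w = Bᵀ *ᵥ ct := by
    rw [hwvec, mulVec_mulVec, ← Matrix.mul_assoc, hGinv, Matrix.one_mul]
  set ev : Fin m → ℝ := ct - B *ᵥ w with hevdef
  have hBe : Bᵀ *ᵥ ev = 0 := by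
    rw [hevdef, mulVec_sub, mulVec_mulVec, ← hGdef, hGw, sub_self]
  -- projection facts
  have hQB : Q1 * Q1ᵀ * B = B := by
    ext i j
    have hmem : B *ᵥ Pi.single j 1 ∈ LinearMap.range B.mulVecLin := ⟨Pi.single j 1, rfl⟩
    rw [← hspan] at hmem
    obtain ⟨u, hu⟩ := hmem
    have hvec : (Q1 * Q1ᵀ * B) *ᵥ Pi.single j 1 = B *ᵥ Pi.single j 1 := by
      rw [← mulVec_mulVec, ← hu, mulVecLin_apply, mulVec_mulVec,
        Matrix.mul_assoc, hQ, Matrix.mul_one]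
    have := congrFun hvec i
    simpa [mulVec_single] using this
  have hproj : Q1 *ᵥ (Q1ᵀ *ᵥ ct) = B *ᵥ w := by
    have hpmem : Q1 *ᵥ (Q1ᵀ *ᵥ ct) ∈ LinearMap.range B.mulVecLin := by
      rw [← hspan]
      exact ⟨Q1ᵀ *ᵥ ct, rfl⟩
    obtain ⟨u, hu⟩ := hpmem
    have hu' : B *ᵥ u = Q1 *ᵥ (Q1ᵀ *ᵥ ct) := hu
    have hBQQ : Bᵀ * (Q1 * Q1ᵀ) = Bᵀ := by
      have h7 : (Q1 * Q1ᵀ * B)ᵀ = Bᵀ := by rw [hQB]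
      rw [Matrix.transpose_mul, Matrix.transpose_mul, transpose_transpose] at h7
      exact h7
    have hBtp : Bᵀ *ᵥ (Q1 *ᵥ (Q1ᵀ *ᵥ ct)) = Bᵀ *ᵥ ct := by
      rw [mulVec_mulVec, mulVec_mulVec, Matrix.mul_assoc, hBQQ]
    have hGu : G *ᵥ u = G *ᵥ w := by
      have l1 : G *ᵥ u = Bᵀ *ᵥ (B *ᵥ u) := by rw [hGdef, ← mulVec_mulVec]
      rw [l1, hu', hBtp, hGw]
    have huw : u = w := by
      have := congrArg (fun z => G⁻¹ *ᵥ z) hGu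
      simpa [mulVec_mulVec, nonsing_inv_mul _ (isUnit_iff_ne_zero.mpr hdetG_ne),
        one_mulVec] using this
    rw [← hu', huw]
  have hecol : ev = (A - Q1 * Q1ᵀ * A) *ᵥ Pi.single (Sum.inr t) 1 := by
    rw [Matrix.sub_mulVec]
    have hA1 : A *ᵥ Pi.single (Sum.inr t : Fin k ⊕ Fin n') 1 = ct := by
      funext i'
      rw [mulVec_single]
      simp [hA, fromCols_apply_inr, hct]
    have hA2 : (Q1 * Q1ᵀ * A) *ᵥ Pi.single (Sum.inr t : Fin k ⊕ Fin n') 1 = B *ᵥ w := by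
      rw [← mulVec_mulVec, hA1, ← mulVec_mulVec, hproj]
    rw [hA1, hA2, hevdef]
  -- norm of ev
  have hev2 : ev ⬝ᵥ ev ≤ μ ^ 4 * lmin := by
    have h5 := sqrt_dot_mulVec_le (A - Q1 * Q1ᵀ * A) (Pi.single (Sum.inr t : Fin k ⊕ Fin n') 1)
    have hss : (Pi.single (Sum.inr t : Fin k ⊕ Fin n') (1:ℝ)) ⬝ᵥ (Pi.single (Sum.inr t : Fin k ⊕ Fin n') 1) = 1 := by
      simp [dotProduct, Pi.single_apply]
    rw [hss, Real.sqrt_one, mul_one, ← hecol] at h5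
    have hchain : specNorm (A - Q1 * Q1ᵀ * A) ≤ μ ^ 2 * Real.sqrt lmin := by
      have hc1 : sval A (k + 1) ≤ sval A k := sval_succ_le A hk
      have hc2 : sval A k ≤ μ * sval B k := h1
      have hc3 := h2
      rw [hsvalBk] at hc2
      nlinarith [sval_nonneg A (k + 1), Real.sqrt_nonneg lmin]
    have hsq : Real.sqrt (ev ⬝ᵥ ev) ≤ μ ^ 2 * Real.sqrt lmin := le_trans h5 hchain
    have hs1 := mul_self_le_mul_self (Real.sqrt_nonneg (ev ⬝ᵥ ev)) hsq
    have hs2 := Real.sq_sqrt (dot_self_nonneg ev)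
    have hs3 := Real.sq_sqrt hlmin_pos.le
    nlinarith [hs1, hs2, hs3]
  -- the multiplier matrix
  set M' := (1 : Matrix (Fin k) (Fin k) ℝ).updateCol i₀ w with hM'def
  have hdetM' : det M' = w i₀ := by
    have h6 := Matrix.cramer_apply (1 : Matrix (Fin k) (Fin k) ℝ) w i₀
    rw [Matrix.cramer_one] at h6
    simpa [hM'def] using h6.symm
  set R : Matrix (Fin m) (Fin k) ℝ := Matrix.of (fun i j => if j = i₀ then ev i else 0)
    with hRdef
  have hdecomp : Bhat = B * M' + R := by
    ext i j
    rw [hBhatdef]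
    simp only [submatrix_apply, id_eq, Matrix.add_apply, hRdef, Matrix.of_apply]
    by_cases hj : j = i₀
    · rw [hj, Function.update_self]
      simp only [hA, fromCols_apply_inr, if_pos rfl]
      have : (B * M') i i₀ = (B *ᵥ w) i := by
        simp [mul_apply, hM'def, updateCol_apply, mulVec, dotProduct]
      rw [this, hevdef]
      simp [hct]
    · rw [Function.update_of_ne hj]
      simp only [hA, fromCols_apply_inl, if_neg hj, add_zero]
      simp [mul_apply, hM'def, updateCol_apply, hj, one_apply, mul_ite]
  have hBR : Bᵀ * R = 0 := by
    ext a b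
    simp only [mul_apply, hRdef, Matrix.of_apply, transpose_apply, Matrix.zero_apply]
    by_cases hb : b = i₀
    · simp only [hb, if_pos rfl]
      have := congrFun hBe a
      simpa [mulVec, dotProduct] using this
    · simp [hb]
  have hGram : Bhatᵀ * Bhat = M'ᵀ * G * M' +
      Matrix.of (fun a b => if a = i₀ ∧ b = i₀ then ev ⬝ᵥ ev else 0) := by
    rw [hdecomp, Matrix.transpose_add, Matrix.transpose_mul, Matrix.add_mul, Matrix.mul_add,
      Matrix.mul_add]
    have e1 : M'ᵀ * Bᵀ * (B * M') = M'ᵀ * G * M' := by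
      rw [Matrix.mul_assoc, ← Matrix.mul_assoc Bᵀ B M', ← hGdef, ← Matrix.mul_assoc]
    have e2 : M'ᵀ * Bᵀ * R = 0 := by rw [Matrix.mul_assoc, hBR, Matrix.mul_zero]
    have e3 : Rᵀ * (B * M') = 0 := by
      have : Rᵀ * B = 0 := by
        have := congrArg Matrix.transpose hBR
        rwa [Matrix.transpose_mul, transpose_transpose, Matrix.transpose_zero] at this
      rw [← Matrix.mul_assoc, this, Matrix.zero_mul]
    have e4 : Rᵀ * R = Matrix.of (fun a b => if a = i₀ ∧ b = i₀ then ev ⬝ᵥ ev else 0) := by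
      ext a b
      simp only [mul_apply, hRdef, Matrix.of_apply, transpose_apply]
      by_cases ha : a = i₀ <;> by_cases hb : b = i₀ <;>
        simp [ha, hb, dotProduct, mul_comm]
    rw [e1, e2, e3, e4, add_zero, zero_add]
  set X := M'ᵀ * G * M' with hXdef
  have hXdet : det X = (w i₀) ^ 2 * det G := by
    rw [hXdef, det_mul, det_mul, det_transpose, hdetM']
    ring
  have hXG : ∀ a b, a ≠ i₀ → b ≠ i₀ → X a b = G a b := by
    intro a b ha hb
    rw [hXdef, Matrix.mul_assoc]
    rw [mul_apply]
    rw [Finset.sum_eq_single a]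
    · rw [mul_apply, Finset.sum_eq_single b]
      · simp [hM'def, updateCol_apply, ha, hb, one_apply]
      · intro d _ hd
        simp [hM'def, updateCol_apply, hb, one_apply, hd]
      · simp
    · intro c _ hc
      simp [hM'def, updateCol_apply, ha, one_apply, transpose_apply, hc, Ne.symm hc]
    · simp
  have hcof : det (X.updateRow i₀ (Pi.single i₀ 1)) = det (G.updateRow i₀ (Pi.single i₀ 1)) :=
    det_updateRow_single_congr hXG
  set c₀ := det (G.updateRow i₀ (Pi.single i₀ 1)) with hc₀def
  have hdetBhat : det (Bhatᵀ * Bhat) = (w i₀) ^ 2 * det G + (ev ⬝ᵥ ev) * c₀ := by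
    rw [hGram]
    have hsum : X + Matrix.of (fun a b => if a = i₀ ∧ b = i₀ then ev ⬝ᵥ ev else 0)
        = X.updateRow i₀ (X i₀ + (ev ⬝ᵥ ev) • (Pi.single i₀ 1 : Fin k → ℝ)) := by
      ext a b
      by_cases ha : a = i₀
      · by_cases hb : b = i₀ <;>
          simp [ha, hb, updateRow_apply, Pi.single_apply, Matrix.add_apply, smul_eq_mul]
      · simp [ha, updateRow_apply, Matrix.add_apply]
    rw [hsum, det_updateRow_add, updateRow_eq_self, det_updateRow_smul, hcof, hXdet]
  -- cofactor bounds
  have hq_eq : G⁻¹ i₀ i₀ = (det G)⁻¹ * c₀ := by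
    rw [Matrix.inv_def, Ring.inverse_eq_inv]
    simp [Matrix.smul_apply, smul_eq_mul, hc₀def, adjugate_apply]
  set x := G⁻¹ *ᵥ Pi.single i₀ 1 with hxdef
  set q := G⁻¹ i₀ i₀ with hqdef
  have hx_i0 : x i₀ = q := by
    rw [hxdef, mulVec_single]
    simp [hqdef]
  have hGx : G *ᵥ x = Pi.single i₀ 1 := by
    rw [hxdef, mulVec_mulVec, hGinv, one_mulVec]
  have hq1 : x ⬝ᵥ (G *ᵥ x) = q := by
    rw [hGx, dotProduct_single, hx_i0, mul_one]
  have hq2 : lmin * (x ⬝ᵥ x) ≤ q := by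
    have := quadForm_ge B hk x
    rw [realCT, ← hGdef, hq1] at this
    exact this
  have hq3 : q ^ 2 ≤ x ⬝ᵥ x := by
    rw [← hx_i0]
    have : x i₀ ^ 2 ≤ ∑ a, x a ^ 2 :=
      Finset.single_le_sum (fun a _ => sq_nonneg (x a)) (Finset.mem_univ i₀)
    simpa [dotProduct, pow_two] using this
  have hq0 : 0 ≤ q := le_trans (mul_nonneg hlmin_pos.le (dot_self_nonneg x)) hq2
  have hqle : lmin * q ≤ 1 := by
    rcases eq_or_lt_of_le hq0 with h | h
    · rw [← h]; simp
    · have h8 : lmin * q ^ 2 ≤ q := by nlinarith [hq2, hq3, hlmin_pos.le]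
      nlinarith [h8, h]
  have hc₀_eq : c₀ = q * det G := by
    rw [hq_eq]
    field_simp
  have hc₀_nonneg : 0 ≤ c₀ := by rw [hc₀_eq]; positivity
  have hlminc₀ : lmin * c₀ ≤ det G := by
    rw [hc₀_eq]
    calc lmin * (q * det G) = (lmin * q) * det G := by ring
    _ ≤ 1 * det G := mul_le_mul_of_nonneg_right hqle hdetGpos.le
    _ = det G := one_mul _
  -- final assembly
  have hα : (w i₀) ^ 2 ≤ ν ^ 2 := by
    have h9 := h3 i₀ t
    have : |w i₀| ≤ ν := h9
    nlinarith [abs_nonneg (w i₀), sq_abs (w i₀)]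
  have hbound : det (Bhatᵀ * Bhat) ≤ (ν ^ 2 + μ ^ 4) * det G := by
    rw [hdetBhat]
    have hb1 : (w i₀) ^ 2 * det G ≤ ν ^ 2 * det G :=
      mul_le_mul_of_nonneg_right hα hdetGpos.le
    have hb2 : (ev ⬝ᵥ ev) * c₀ ≤ μ ^ 4 * (lmin * c₀) := by
      calc (ev ⬝ᵥ ev) * c₀ ≤ (μ ^ 4 * lmin) * c₀ :=
        mul_le_mul_of_nonneg_right hev2 hc₀_nonneg
      _ = μ ^ 4 * (lmin * c₀) := by ring
    have hb3 : μ ^ 4 * (lmin * c₀) ≤ μ ^ 4 * det G :=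
      mul_le_mul_of_nonneg_left hlminc₀ (by positivity)
    nlinarith [hb1, hb2, hb3]
  have hvolBhat : vol Bhat = Real.sqrt (det (Bhatᵀ * Bhat)) := vol_eq_sqrt_det hkm Bhat
  have hvolB : vol B = Real.sqrt (det G) := by
    rw [hGdef]; exact vol_eq_sqrt_det hkm B
  rw [hvolBhat, hvolB]
  have hnonneg : (0:ℝ) ≤ ν ^ 2 + μ ^ 4 := by positivity
  calc Real.sqrt (det (Bhatᵀ * Bhat)) ≤ Real.sqrt ((ν ^ 2 + μ ^ 4) * det G) :=
    Real.sqrt_le_sqrt hbound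
  _ = Real.sqrt (ν ^ 2 + μ ^ 4) * Real.sqrt (det G) := Real.sqrt_mul hnonneg _
end

section
/- Let μ > 1 and let A = diag(1, μ⁻¹, μ, 1) ∈ ℝ^{4×4}, partitioned with k = 2 blocks A11 = diag(1, μ⁻¹), A12 = 0, A21 = 0, A22 = diag(μ, 1). Then: (a) σ_2(A) = 1 = μ·σ_2(A11); (b) the Schur complement S(A11) = A22 satisfies ‖S(A11)‖₂ = μ = μ·σ_3(A); (c) ‖A21A11⁻¹‖_max = ‖A11⁻¹A12‖_max = 0; and yet (d) the 2×2 submatrix A([1,3],[1,3]) = diag(1, μ), which differs from A11 in one row and one column, satisfies vol(A([1,3],[1,3])) = μ²·vol(A11). In particular, A11 is not a γ-local maximum volume 2×2 submatrix of A for any γ < μ². -/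
open Matrix

noncomputable def dA11 (μ : ℝ) : Matrix (Fin 2) (Fin 2) ℝ := Matrix.diagonal ![1, μ⁻¹]

noncomputable def dA22 (μ : ℝ) : Matrix (Fin 2) (Fin 2) ℝ := Matrix.diagonal ![μ, 1]

/-- A = diag(1, μ⁻¹, μ, 1) written in 2×2 block form. -/
noncomputable def dA (μ : ℝ) : Matrix (Fin 2 ⊕ Fin 2) (Fin 2 ⊕ Fin 2) ℝ :=
  Matrix.fromBlocks (dA11 μ) 0 0 (dA22 μ)

section ranks
variable {n : Type*} [Fintype n] [DecidableEq n]

lemma rank_le_one_of (w : n → ℝ) (i0 : n) (h : ∀ i, i ≠ i0 → w i = 0) :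
    (Matrix.diagonal w).rank ≤ 1 := by
  classical
  rw [Matrix.rank_diagonal]
  refine Fintype.card_le_one_iff.mpr ?_
  rintro ⟨a, ha⟩ ⟨b, hb⟩
  have ha' : a = i0 := by by_contra hc; exact ha (h a hc)
  have hb' : b = i0 := by by_contra hc; exact hb (h b hc)
  exact Subtype.ext (ha'.trans hb'.symm)

end ranks

section helpers
variable {m n : Type*} [Fintype m] [Fintype n] [DecidableEq n]

lemma enorm (u : m → ℝ) :
    ‖(WithLp.equiv 2 (m → ℝ)).symm u‖ = Real.sqrt (∑ i, u i ^ 2) := by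
  rw [EuclideanSpace.norm_eq]
  congr 1
  refine Finset.sum_congr rfl fun i _ => ?_
  rw [show ((WithLp.equiv 2 (m → ℝ)).symm u).ofLp i = u i from rfl, Real.norm_eq_abs, sq_abs]

lemma specNorm_apply_le (A : Matrix m n ℝ) (x : n → ℝ) :
    Real.sqrt (∑ i, (A *ᵥ x) i ^ 2) ≤ specNorm A * Real.sqrt (∑ j, x j ^ 2) := by
  have h := (LinearMap.toContinuousLinearMap (Matrix.toEuclideanLin A)).le_opNorm
      ((WithLp.equiv 2 (n → ℝ)).symm x)
  rw [LinearMap.coe_toContinuousLinearMap', (show ∀ v, Matrix.toEuclideanLin A ((WithLp.equiv 2 (n → ℝ)).symm v) = (WithLp.equiv 2 (m → ℝ)).symm (A *ᵥ v) from fun _ => rfl),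
    _root_.enorm, _root_.enorm] at h
  exact h

lemma specNorm_le_bound (A : Matrix m n ℝ) (c : ℝ) (hc : 0 ≤ c)
    (h : ∀ x : n → ℝ, Real.sqrt (∑ i, (A *ᵥ x) i ^ 2) ≤ c * Real.sqrt (∑ j, x j ^ 2)) :
    specNorm A ≤ c := by
  refine ContinuousLinearMap.opNorm_le_bound _ hc fun y => ?_
  have hy : y = (WithLp.equiv 2 (n → ℝ)).symm (WithLp.equiv 2 (n → ℝ) y) := rfl
  rw [LinearMap.coe_toContinuousLinearMap', hy, (show ∀ v, Matrix.toEuclideanLin A ((WithLp.equiv 2 (n → ℝ)).symm v) = (WithLp.equiv 2 (m → ℝ)).symm (A *ᵥ v) from fun _ => rfl),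
    _root_.enorm, _root_.enorm]
  exact h _

variable [DecidableEq m]

lemma specNorm_diagonal_le (d : n → ℝ) (c : ℝ) (hc : 0 ≤ c) (h : ∀ i, |d i| ≤ c) :
    specNorm (diagonal d) ≤ c := by
  refine specNorm_le_bound _ c hc fun x => ?_
  rw [← Real.sqrt_sq hc, ← Real.sqrt_mul (sq_nonneg c)]
  apply Real.sqrt_le_sqrt
  rw [Finset.mul_sum]
  refine Finset.sum_le_sum fun i _ => ?_
  rw [mulVec_diagonal]
  have hi : d i ^ 2 ≤ c ^ 2 := by
    have := h i
    nlinarith [abs_nonneg (d i), sq_abs (d i)]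
  nlinarith [sq_nonneg (x i)]

lemma sum_single_sq (i : n) (a : ℝ) : ∑ j, (Pi.single i a j) ^ 2 = a ^ 2 := by
  rw [Finset.sum_eq_single i]
  · simp
  · intro b _ hb
    simp [Pi.single_apply, hb]
  · simp

lemma le_specNorm_diagonal (d : n → ℝ) (i : n) : |d i| ≤ specNorm (diagonal d) := by
  have h := specNorm_apply_le (diagonal d) (Pi.single i (1:ℝ))
  have h1 : ∀ j, (diagonal d *ᵥ Pi.single i (1:ℝ)) j = (Pi.single i (d i) : n → ℝ) j := by
    intro j
    rw [mulVec_diagonal]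
    rcases eq_or_ne j i with rfl | hj
    · simp
    · simp [Pi.single_apply, hj]
  rw [Finset.sum_congr rfl (fun j _ => by rw [h1 j]), sum_single_sq, sum_single_sq,
    Real.sqrt_sq_eq_abs] at h
  norm_num at h
  simpa using h

lemma specNorm_diagonal_eq (d : n → ℝ) (i : n) (h : ∀ j, |d j| ≤ |d i|) :
    specNorm (diagonal d) = |d i| :=
  le_antisymm (specNorm_diagonal_le d _ (abs_nonneg _) h) (le_specNorm_diagonal d i)

end helpers

section sval
variable {m n : Type*} [Fintype m] [Fintype n] [DecidableEq n]

lemma sval_le_specNorm_sub (A : Matrix m n ℝ) (j : ℕ) (B : Matrix m n ℝ) (hB : B.rank < j) :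
    sval A j ≤ specNorm (A - B) := by
  refine csInf_le ⟨0, ?_⟩ ⟨B, hB, rfl⟩
  rintro x ⟨B', -, rfl⟩
  exact norm_nonneg _

lemma exists_ker_vec {k : ℕ} (B : Matrix m n ℝ) (v : Fin k → n) (hB : B.rank < k) :
    ∃ g : Fin k → ℝ, (∃ i, g i ≠ 0) ∧ B *ᵥ (∑ i, g i • (Pi.single (v i) (1:ℝ) : n → ℝ)) = 0 := by
  classical
  have hnli : ¬ LinearIndependent ℝ (fun i => B *ᵥ Pi.single (v i) (1:ℝ)) := by
    intro hli
    have hmem : ∀ i, B *ᵥ Pi.single (v i) (1:ℝ) ∈ LinearMap.range B.mulVecLin :=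
      fun i => ⟨Pi.single (v i) 1, rfl⟩
    have hli' : LinearIndependent ℝ
        (fun i => (⟨B *ᵥ Pi.single (v i) (1:ℝ), hmem i⟩ : LinearMap.range B.mulVecLin)) := by
      apply LinearIndependent.of_comp (LinearMap.range B.mulVecLin).subtype
      exact hli
    have hcard := hli'.fintype_card_le_finrank
    rw [Fintype.card_fin] at hcard
    rw [Matrix.rank] at hB
    omega
  rw [Fintype.not_linearIndependent_iff] at hnli
  obtain ⟨g, hsum, hi⟩ := hnli
  refine ⟨g, hi, ?_⟩
  have : B *ᵥ (∑ i, g i • (Pi.single (v i) (1:ℝ) : n → ℝ))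
      = ∑ i, g i • (B *ᵥ (Pi.single (v i) (1:ℝ) : n → ℝ)) := by
    simp only [← Matrix.mulVecLin_apply, map_sum, _root_.map_smul]
  rw [this, hsum]

omit [Fintype m] in
lemma le_sval_diagonal (d : n → ℝ) {j : ℕ} (hj : 0 < j) (σ : ℝ) (hσ : 0 ≤ σ)
    (v : Fin j → n) (hv : Function.Injective v) (hd : ∀ i, σ ≤ |d (v i)|) :
    σ ≤ sval (diagonal d) j := by
  classical
  refine le_csInf ⟨specNorm (diagonal d - 0), 0, by simpa using hj, rfl⟩ ?_
  rintro y ⟨B, hB, rfl⟩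
  obtain ⟨g, ⟨i0, hi0⟩, hker⟩ := exists_ker_vec B v hB
  set x : n → ℝ := ∑ i, g i • (Pi.single (v i) (1:ℝ) : n → ℝ) with hxdef
  have hxapp : ∀ jj, x jj = ∑ i, g i * (if v i = jj then 1 else 0) := by
    intro jj
    simp [hxdef, Finset.sum_apply, Pi.single_apply, eq_comm]
  have hxv : ∀ i, x (v i) = g i := by
    intro i
    rw [hxapp]
    rw [Finset.sum_eq_single i]
    · simp
    · intro b _ hb
      simp [hv.ne hb]
    · simp
  have hx0 : ∀ jj, (∀ i, v i ≠ jj) → x jj = 0 := by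
    intro jj hjj
    rw [hxapp]
    exact Finset.sum_eq_zero fun i _ => by simp [hjj i]
  -- key pointwise bound
  have key : ∀ jj, σ ^ 2 * x jj ^ 2 ≤ (d jj * x jj) ^ 2 := by
    intro jj
    by_cases hz : x jj = 0
    · simp [hz]
    · have : ∃ i, v i = jj := by
        by_contra hc
        push_neg at hc
        exact hz (hx0 jj hc)
      obtain ⟨i, rfl⟩ := this
      have h1 := hd i
      have h2 : σ ^ 2 ≤ d (v i) ^ 2 := by
        nlinarith [abs_nonneg (d (v i)), sq_abs (d (v i))]
      nlinarith [sq_nonneg (x (v i))]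
  have hAx : (diagonal d - B) *ᵥ x = diagonal d *ᵥ x := by
    rw [Matrix.sub_mulVec, hker, sub_zero]
  have h1 : σ * Real.sqrt (∑ jj, x jj ^ 2) ≤ Real.sqrt (∑ i, ((diagonal d - B) *ᵥ x) i ^ 2) := by
    rw [hAx]
    have : σ * Real.sqrt (∑ jj, x jj ^ 2) = Real.sqrt (σ ^ 2 * ∑ jj, x jj ^ 2) := by
      rw [Real.sqrt_mul (sq_nonneg σ), Real.sqrt_sq hσ]
    rw [this]
    apply Real.sqrt_le_sqrt
    rw [Finset.mul_sum]
    refine Finset.sum_le_sum fun i _ => ?_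
    rw [mulVec_diagonal]
    exact key i
  have h2 := specNorm_apply_le (diagonal d - B) x
  have hxpos : 0 < Real.sqrt (∑ jj, x jj ^ 2) := by
    apply Real.sqrt_pos.mpr
    have hle : x (v i0) ^ 2 ≤ ∑ jj, x jj ^ 2 :=
      Finset.single_le_sum (f := fun jj => x jj ^ 2) (fun jj _ => sq_nonneg _)
        (Finset.mem_univ _)
    rw [hxv i0] at hle
    nlinarith [sq_nonneg (g i0), sq_abs (g i0), abs_pos.mpr hi0]
  have := le_trans h1 h2
  exact le_of_mul_le_mul_right (by linarith) hxpos

end sval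

lemma vol_two (A : Matrix (Fin 2) (Fin 2) ℝ) : vol A = sval A 1 * sval A 2 := by
  have h : Finset.Icc 1 (min (Fintype.card (Fin 2)) (Fintype.card (Fin 2))) = {1, 2} := by
    decide
  rw [vol, h, Finset.prod_insert (by decide), Finset.prod_singleton]

section main
variable {μ : ℝ} (hμ : 1 < μ)
include hμ

lemma hdA_eq : dA μ = Matrix.diagonal (Sum.elim ![1, μ⁻¹] ![μ, 1]) := by
  rw [dA, dA11, dA22, Matrix.fromBlocks_diagonal]

lemma sval_dA_two : sval (dA μ) 2 = 1 := by
  have hμ0 : (0:ℝ) < μ := lt_trans one_pos hμ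
  have hinv1 : μ⁻¹ ≤ 1 := by rw [inv_le_one_iff₀]; right; exact le_of_lt hμ
  have hinv0 : (0:ℝ) < μ⁻¹ := inv_pos.mpr hμ0
  rw [hdA_eq hμ]
  refine le_antisymm ?_ ?_
  · have hrank : (Matrix.diagonal (Sum.elim ![0,0] ![μ,0] : Fin 2 ⊕ Fin 2 → ℝ)).rank < 2 := by
      have := rank_le_one_of (Sum.elim ![0,0] ![μ,0] : Fin 2 ⊕ Fin 2 → ℝ) (Sum.inr 0)
        (by rintro (i|i) h <;> fin_cases i <;> simp_all)
      omega
    refine le_trans (sval_le_specNorm_sub _ 2 _ hrank) ?_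
    have heq : Matrix.diagonal (Sum.elim ![1, μ⁻¹] ![μ, 1])
        - Matrix.diagonal (Sum.elim ![0,0] ![μ,0] : Fin 2 ⊕ Fin 2 → ℝ)
        = Matrix.diagonal (Sum.elim ![1, μ⁻¹] ![0, 1] : Fin 2 ⊕ Fin 2 → ℝ) := by
      rw [Matrix.diagonal_sub]
      refine congrArg Matrix.diagonal (funext fun i => ?_)
      rcases i with i | i <;> fin_cases i <;> simp
    rw [heq]
    refine specNorm_diagonal_le _ 1 zero_le_one ?_
    rintro (i|i) <;> fin_cases i <;> simp [abs_of_pos hinv0, hinv1]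
  · refine le_sval_diagonal _ (by norm_num) 1 zero_le_one ![Sum.inl 0, Sum.inr 0]
      (by decide) ?_
    intro i
    fin_cases i <;> simp [abs_of_pos hμ0, le_of_lt hμ]

lemma sval_dA_three : sval (dA μ) 3 = 1 := by
  have hμ0 : (0:ℝ) < μ := lt_trans one_pos hμ
  have hinv1 : μ⁻¹ ≤ 1 := by rw [inv_le_one_iff₀]; right; exact le_of_lt hμ
  have hinv0 : (0:ℝ) < μ⁻¹ := inv_pos.mpr hμ0
  rw [hdA_eq hμ]
  refine le_antisymm ?_ ?_
  · have hrank : (Matrix.diagonal (Sum.elim ![0,0] ![μ,0] : Fin 2 ⊕ Fin 2 → ℝ)).rank < 3 := by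
      have := rank_le_one_of (Sum.elim ![0,0] ![μ,0] : Fin 2 ⊕ Fin 2 → ℝ) (Sum.inr 0)
        (by rintro (i|i) h <;> fin_cases i <;> simp_all)
      omega
    refine le_trans (sval_le_specNorm_sub _ 3 _ hrank) ?_
    have heq : Matrix.diagonal (Sum.elim ![1, μ⁻¹] ![μ, 1])
        - Matrix.diagonal (Sum.elim ![0,0] ![μ,0] : Fin 2 ⊕ Fin 2 → ℝ)
        = Matrix.diagonal (Sum.elim ![1, μ⁻¹] ![0, 1] : Fin 2 ⊕ Fin 2 → ℝ) := by
      rw [Matrix.diagonal_sub]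
      refine congrArg Matrix.diagonal (funext fun i => ?_)
      rcases i with i | i <;> fin_cases i <;> simp
    rw [heq]
    refine specNorm_diagonal_le _ 1 zero_le_one ?_
    rintro (i|i) <;> fin_cases i <;> simp [abs_of_pos hinv0, hinv1]
  · refine le_sval_diagonal _ (by norm_num) 1 zero_le_one ![Sum.inl 0, Sum.inr 0, Sum.inr 1]
      (by decide) ?_
    intro i
    fin_cases i <;> simp [abs_of_pos hμ0, le_of_lt hμ]

lemma sval_dA11_one : sval (dA11 μ) 1 = 1 := by
  have hμ0 : (0:ℝ) < μ := lt_trans one_pos hμ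
  have hinv1 : μ⁻¹ ≤ 1 := by rw [inv_le_one_iff₀]; right; exact le_of_lt hμ
  have hinv0 : (0:ℝ) < μ⁻¹ := inv_pos.mpr hμ0
  rw [dA11]
  refine le_antisymm ?_ ?_
  · have hrank : (0 : Matrix (Fin 2) (Fin 2) ℝ).rank < 1 := by
      rw [Matrix.rank_zero]; norm_num
    refine le_trans (sval_le_specNorm_sub _ 1 _ hrank) ?_
    rw [sub_zero]
    refine specNorm_diagonal_le _ 1 zero_le_one ?_
    intro i
    fin_cases i <;> simp [abs_of_pos hinv0, hinv1]
  · refine le_sval_diagonal _ (by norm_num) 1 zero_le_one ![0] (by decide) ?_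
    intro i
    fin_cases i <;> simp

lemma sval_dA11_two : sval (dA11 μ) 2 = μ⁻¹ := by
  have hμ0 : (0:ℝ) < μ := lt_trans one_pos hμ
  have hinv1 : μ⁻¹ ≤ 1 := by rw [inv_le_one_iff₀]; right; exact le_of_lt hμ
  have hinv0 : (0:ℝ) < μ⁻¹ := inv_pos.mpr hμ0
  rw [dA11]
  refine le_antisymm ?_ ?_
  · have hrank : (Matrix.diagonal ![(1:ℝ), 0]).rank < 2 := by
      have := rank_le_one_of ![(1:ℝ), 0] 0 (by intro i h; fin_cases i <;> simp_all)
      omega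
    refine le_trans (sval_le_specNorm_sub _ 2 _ hrank) ?_
    have heq : Matrix.diagonal ![(1:ℝ), μ⁻¹] - Matrix.diagonal ![(1:ℝ), 0]
        = Matrix.diagonal ![(0:ℝ), μ⁻¹] := by
      rw [Matrix.diagonal_sub]
      refine congrArg Matrix.diagonal (funext fun i => ?_)
      fin_cases i <;> simp
    rw [heq]
    refine specNorm_diagonal_le _ μ⁻¹ (le_of_lt hinv0) ?_
    intro i
    fin_cases i <;> simp [abs_of_pos hinv0, le_of_lt hμ0]
  · refine le_sval_diagonal _ (by norm_num) μ⁻¹ (le_of_lt hinv0) ![0, 1] (by decide) ?_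
    intro i
    fin_cases i <;> simp [abs_of_pos hinv0, hinv1]

lemma sval_sub_one : sval (Matrix.diagonal ![(1:ℝ), μ]) 1 = μ := by
  have hμ0 : (0:ℝ) < μ := lt_trans one_pos hμ
  refine le_antisymm ?_ ?_
  · have hrank : (0 : Matrix (Fin 2) (Fin 2) ℝ).rank < 1 := by
      rw [Matrix.rank_zero]; norm_num
    refine le_trans (sval_le_specNorm_sub _ 1 _ hrank) ?_
    rw [sub_zero]
    refine specNorm_diagonal_le _ μ (le_of_lt hμ0) ?_
    intro i
    fin_cases i <;> simp [abs_of_pos hμ0, le_of_lt hμ]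
  · refine le_sval_diagonal _ (by norm_num) μ (le_of_lt hμ0) ![1] (by decide) ?_
    intro i
    fin_cases i <;> simp [abs_of_pos hμ0]

lemma sval_sub_two : sval (Matrix.diagonal ![(1:ℝ), μ]) 2 = 1 := by
  have hμ0 : (0:ℝ) < μ := lt_trans one_pos hμ
  refine le_antisymm ?_ ?_
  · have hrank : (Matrix.diagonal ![(0:ℝ), μ]).rank < 2 := by
      have := rank_le_one_of ![(0:ℝ), μ] 1 (by intro i h; fin_cases i <;> simp_all)
      omega
    refine le_trans (sval_le_specNorm_sub _ 2 _ hrank) ?_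
    have heq : Matrix.diagonal ![(1:ℝ), μ] - Matrix.diagonal ![(0:ℝ), μ]
        = Matrix.diagonal ![(1:ℝ), 0] := by
      rw [Matrix.diagonal_sub]
      refine congrArg Matrix.diagonal (funext fun i => ?_)
      fin_cases i <;> simp
    rw [heq]
    refine specNorm_diagonal_le _ 1 zero_le_one ?_
    intro i
    fin_cases i <;> simp
  · refine le_sval_diagonal _ (by norm_num) 1 zero_le_one ![0, 1] (by decide) ?_
    intro i
    fin_cases i <;> simp [abs_of_pos hμ0, le_of_lt hμ]

lemma hsub_eq : (dA μ).submatrix ![Sum.inl 0, Sum.inr 0] ![Sum.inl 0, Sum.inr 0]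
    = Matrix.diagonal ![(1:ℝ), μ] := by
  ext i j
  fin_cases i <;> fin_cases j <;>
    simp [dA, dA11, dA22, Matrix.fromBlocks, Matrix.diagonal]

end main

theorem statement_17 (μ : ℝ) (hμ : 1 < μ) :
    (sval (dA μ) 2 = 1 ∧ 1 = μ * sval (dA11 μ) 2) ∧
    (specNorm (dA22 μ - (0 : Matrix (Fin 2) (Fin 2) ℝ) * (dA11 μ)⁻¹ *
        (0 : Matrix (Fin 2) (Fin 2) ℝ)) = μ ∧
      μ = μ * sval (dA μ) 3) ∧
    ((∀ i j, ((0 : Matrix (Fin 2) (Fin 2) ℝ) * (dA11 μ)⁻¹) i j = 0) ∧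
      (∀ i j, ((dA11 μ)⁻¹ * (0 : Matrix (Fin 2) (Fin 2) ℝ)) i j = 0)) ∧
    (vol ((dA μ).submatrix ![Sum.inl 0, Sum.inr 0] ![Sum.inl 0, Sum.inr 0]) =
      μ ^ 2 * vol (dA11 μ)) ∧
    (∀ γ : ℝ, 1 ≤ γ → γ < μ ^ 2 →
      ¬ (∀ (r c : Fin 2 → Fin 2 ⊕ Fin 2), DiffOne Sum.inl r → DiffOne Sum.inl c →
        vol ((dA μ).submatrix r c) ≤ γ * vol (dA11 μ))) := by
  have hμ0 : (0:ℝ) < μ := lt_trans one_pos hμ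
  have hμne : μ ≠ 0 := ne_of_gt hμ0
  have hinv0 : (0:ℝ) < μ⁻¹ := inv_pos.mpr hμ0
  have hmul : μ * μ⁻¹ = 1 := mul_inv_cancel₀ hμne
  have hvol11 : vol (dA11 μ) = μ⁻¹ := by
    rw [vol_two, sval_dA11_one hμ, sval_dA11_two hμ, one_mul]
  have hvolM : vol ((dA μ).submatrix ![Sum.inl 0, Sum.inr 0] ![Sum.inl 0, Sum.inr 0]) = μ := by
    rw [hsub_eq hμ, vol_two, sval_sub_one hμ, sval_sub_two hμ, mul_one]
  have hsq : μ ^ 2 * μ⁻¹ = μ := by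
    field_simp
  refine ⟨⟨sval_dA_two hμ, ?_⟩, ⟨?_, ?_⟩, ⟨?_, ?_⟩, ?_, ?_⟩
  · rw [sval_dA11_two hμ, hmul]
  · have h0 : (0 : Matrix (Fin 2) (Fin 2) ℝ) * (dA11 μ)⁻¹ * (0 : Matrix (Fin 2) (Fin 2) ℝ)
        = 0 := by
      rw [Matrix.zero_mul, Matrix.zero_mul]
    rw [h0, sub_zero, dA22]
    refine le_antisymm (specNorm_diagonal_le _ μ (le_of_lt hμ0) ?_) ?_
    · intro i; fin_cases i <;> simp [abs_of_pos hμ0, le_of_lt hμ]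
    · have h := le_specNorm_diagonal (![μ, 1] : Fin 2 → ℝ) 0
      simpa [abs_of_pos hμ0] using h
  · rw [sval_dA_three hμ, mul_one]
  · intro i j; simp [Matrix.zero_mul]
  · intro i j; simp [Matrix.mul_zero]
  · rw [hvolM, hvol11, hsq]
  · intro γ hγ1 hγ2 h
    have hr : DiffOne Sum.inl (![Sum.inl 0, Sum.inr 0] : Fin 2 → Fin 2 ⊕ Fin 2) :=
      ⟨by decide, by decide⟩
    have hle := h _ _ hr hr
    rw [hvolM, hvol11] at hle
    have hlt : γ * μ⁻¹ < μ ^ 2 * μ⁻¹ := mul_lt_mul_of_pos_right hγ2 hinv0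
    rw [hsq] at hlt
    linarith
end

section
/- Let n ≥ 2 and let c, s > 0 with c² + s² = 1. Let K_n ∈ ℝ^{n×n} be the Kahan matrix, the upper triangular matrix with (K_n)_{ii} = c^{i−1} for 1 ≤ i ≤ n, (K_n)_{ij} = −s·c^{i−1} for j > i, and (K_n)_{ij} = 0 for j < i. Then the n×(n−1) submatrix of the last n−1 columns of K_n has volume at least s·(1+s)^{n−2} times the volume of the n×(n−1) submatrix of the first n−1 columns: vol(K_n(:, 2:n)) ≥ s·(1+s)^{n−2}·vol(K_n(:, 1:n−1)). Consequently, for A = K_nᵀ·K_n, the trailing principal (n−1)×(n−1) submatrix A(2:n, 2:n) satisfies vol(A(2:n, 2:n)) ≥ s²·(1+s)^{2(n−2)}·vol(A(1:n−1, 1:n−1)), so the leading (n−1)×(n−1) principal submatrix of A (which is the pivot selected by Gaussian elimination with complete pivoting in exact arithmetic) fails to be a γ-local maximum volume submatrix for every γ < s²·(1+s)^{2(n−2)}. -/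
open Matrix

/-- The n×n Kahan matrix (0-indexed): diagonal entries c^i, entries -s·c^i above
the diagonal, and 0 below the diagonal. -/
noncomputable def kahan (n : ℕ) (c s : ℝ) : Matrix (Fin n) (Fin n) ℝ :=
  Matrix.of fun i j => if i = j then c ^ (i : ℕ) else if i < j then -s * c ^ (i : ℕ) else 0

set_option linter.unusedSectionVars false
set_option linter.unreachableTactic false
set_option linter.unusedTactic false
set_option maxHeartbeats 1000000

section GeneralTheory
open RealInnerProductSpace Module

namespace SvalAux

variable {m n : Type*} [Fintype m] [Fintype n] [DecidableEq m] [DecidableEq n]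

lemma specNorm_nonneg (A : Matrix m n ℝ) : 0 ≤ specNorm A := norm_nonneg _

lemma norm_toEL_le (M : Matrix m n ℝ) (x : EuclideanSpace ℝ n) :
    ‖toEuclideanLin M x‖ ≤ specNorm M * ‖x‖ := by
  simpa [specNorm] using (LinearMap.toContinuousLinearMap (toEuclideanLin M)).le_opNorm x

lemma specNorm_le_bound (M : Matrix m n ℝ) {C : ℝ} (hC : 0 ≤ C)
    (h : ∀ x : EuclideanSpace ℝ n, ‖toEuclideanLin M x‖ ≤ C * ‖x‖) : specNorm M ≤ C :=
  ContinuousLinearMap.opNorm_le_bound _ hC (by simpa using h)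

lemma svalSet_bddBelow (A : Matrix m n ℝ) (j : ℕ) :
    BddBelow {x : ℝ | ∃ B : Matrix m n ℝ, B.rank < j ∧ x = specNorm (A - B)} :=
  ⟨0, fun _ ⟨_, _, hx⟩ => hx ▸ norm_nonneg _⟩

lemma sval_nonneg (A : Matrix m n ℝ) (j : ℕ) : 0 ≤ sval A j :=
  Real.sInf_nonneg (fun _ ⟨_, _, hx⟩ => hx ▸ norm_nonneg _)

lemma sval_le_specNorm_sub {A B : Matrix m n ℝ} {j : ℕ} (h : B.rank < j) :
    sval A j ≤ specNorm (A - B) :=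
  csInf_le (svalSet_bddBelow A j) ⟨B, h, rfl⟩

lemma le_sval {A : Matrix m n ℝ} {j : ℕ} {C : ℝ} (hj : 0 < j)
    (h : ∀ B : Matrix m n ℝ, B.rank < j → C ≤ specNorm (A - B)) : C ≤ sval A j :=
  le_csInf ⟨specNorm A, 0, by simpa using hj, by simp⟩
    (fun x ⟨B, hB, hx⟩ => hx ▸ h B hB)

lemma rank_eq_finrank_range_toEL (B : Matrix m n ℝ) :
    B.rank = Module.finrank ℝ ↥(LinearMap.range (Matrix.toEuclideanLin B)) := by
  rw [Matrix.toEuclideanLin_eq_toLin]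
  exact rank_eq_finrank_range_toLin B (PiLp.basisFun 2 ℝ m) (PiLp.basisFun 2 ℝ n)

lemma repr_eq_zero_of_mem_span (b : OrthonormalBasis n ℝ (EuclideanSpace ℝ n))
    (x : EuclideanSpace ℝ n) (s : Set n) (hx : x ∈ Submodule.span ℝ (⇑b '' s))
    (i : n) (hi : i ∉ s) : b.repr x i = 0 := by
  induction hx using Submodule.span_induction with
  | mem y hy =>
      obtain ⟨j, hj, rfl⟩ := hy
      rw [b.repr_self]
      simp only [EuclideanSpace.single_apply]
      rw [if_neg]
      intro h; exact hi (h ▸ hj)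
  | zero => simp
  | add y z _ _ hy hz => simp [map_add, hy, hz]
  | smul a y _ hy => rw [_root_.map_smul]; simp [hy]

lemma normsq_repr (b : OrthonormalBasis n ℝ (EuclideanSpace ℝ n)) (x : EuclideanSpace ℝ n) :
    ‖x‖ ^ 2 = ∑ i, (b.repr x i) ^ 2 := by
  rw [← b.repr.norm_map x, EuclideanSpace.norm_eq, Real.sq_sqrt (by positivity)]
  simp [sq_abs]

lemma inner_repr (b : OrthonormalBasis n ℝ (EuclideanSpace ℝ n)) (x y : EuclideanSpace ℝ n) :
    ⟪x, y⟫ = ∑ i, (b.repr x i) * (b.repr y i) := by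
  rw [← b.repr.inner_map_map x y]
  simp only [PiLp.inner_apply, RCLike.inner_apply, starRingEnd_apply, star_trivial]
  exact Finset.sum_congr rfl fun i _ => mul_comm _ _

lemma normsq_toEL (A : Matrix m n ℝ) (x : EuclideanSpace ℝ n) :
    ‖toEuclideanLin A x‖ ^ 2 = ⟪x, toEuclideanLin (Aᵀ * A) x⟫ := by
  rw [← real_inner_self_eq_norm_sq]
  simp only [toEuclideanLin_apply, PiLp.inner_apply, RCLike.inner_apply, starRingEnd_apply,
    star_trivial]
  have h := Matrix.dotProduct_mulVec x.ofLp Aᵀ (A *ᵥ x.ofLp)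
  rw [Matrix.vecMul_transpose] at h
  simp only [← Matrix.mulVec_mulVec]
  rw [show ∀ u v : m → ℝ, ∑ i, u i * v i = u ⬝ᵥ v from fun _ _ => rfl,
      show ∀ (u : n → ℝ) (v : n → ℝ), ∑ i, u i * v i = u ⬝ᵥ v from fun _ _ => rfl, ← h]
  exact dotProduct_comm _ _

lemma toEL_mul (M : Matrix m n ℝ) (N : Matrix n n ℝ) (x : EuclideanSpace ℝ n) :
    toEuclideanLin (M * N) x = toEuclideanLin M (toEuclideanLin N x) := by
  simp [toEuclideanLin_apply, Matrix.mulVec_mulVec]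


lemma toEL_vecMulVec {n : Type*} [Fintype n] [DecidableEq n] (u v x : EuclideanSpace ℝ n) :
    toEuclideanLin (vecMulVec u v) x = ⟪v, x⟫ • u := by
  apply (WithLp.equiv 2 (n → ℝ)).injective
  funext i
  simp only [toEuclideanLin_apply, Equiv.apply_symm_apply, Matrix.mulVec, Matrix.vecMulVec_apply,
    dotProduct, PiLp.inner_apply, RCLike.inner_apply, starRingEnd_apply, star_trivial,
    WithLp.equiv_apply, WithLp.ofLp_toLp, PiLp.smul_apply, Pi.smul_apply, smul_eq_mul]
  rw [Finset.sum_mul]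
  exact Finset.sum_congr rfl fun i' _ => by
    ring

lemma sqrt_prod {ι : Type*} (s : Finset ι) (f : ι → ℝ) (h : ∀ i ∈ s, 0 ≤ f i) :
    Real.sqrt (∏ i ∈ s, f i) = ∏ i ∈ s, Real.sqrt (f i) := by
  induction s using Finset.cons_induction with
  | empty => simp
  | cons a s ha ih =>
      rw [Finset.prod_cons, Finset.prod_cons, Real.sqrt_mul (h a (Finset.mem_cons_self a s)),
        ih (fun i hi => h i (Finset.mem_cons_of_mem hi))]

theorem exists_svals (A : Matrix m n ℝ) :
    ∃ d : Fin (Fintype.card n) → ℝ, (∀ k, 0 ≤ d k) ∧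
      (∀ k : Fin (Fintype.card n), sval A ((k : ℕ) + 1) = Real.sqrt (d k)) ∧
      ∏ k, d k = (Aᵀ * A).det := by
  classical
  set nn := Fintype.card n with hnndef
  have hG : (Aᵀ * A).IsHermitian := by
    rw [← Matrix.conjTranspose_eq_transpose_of_trivial]
    exact Matrix.isHermitian_conjTranspose_mul_self A
  set b := hG.eigenvectorBasis with hbdef
  set μ := hG.eigenvalues with hμdef
  have hμ0 : ∀ i, 0 ≤ μ i := by
    intro i
    have hPSD : (Aᵀ * A).PosSemidef := by
      rw [← Matrix.conjTranspose_eq_transpose_of_trivial]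
      exact Matrix.posSemidef_conjTranspose_mul_self A
    exact hPSD.eigenvalues_nonneg i
  set eqn : Fin nn ≃ n := (Fintype.equivFin n).symm with heqn
  set ψ : Fin nn ≃ n := ((Fin.revPerm.trans (Tuple.sort (μ ∘ eqn))).trans eqn) with hψ
  set d : Fin nn → ℝ := fun k => μ (ψ k) with hd
  have hd0 : ∀ k, 0 ≤ d k := fun k => hμ0 _
  have hanti : ∀ k l : Fin nn, k ≤ l → d l ≤ d k := by
    intro k l hkl
    have := Tuple.monotone_sort (μ ∘ eqn) (Fin.rev_le_rev.mpr hkl)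
    simpa [hd, hψ, Function.comp, Equiv.trans_apply] using this
  have hsym := (Matrix.isHermitian_iff_isSymmetric.1 hG)
  have hGb : ∀ j, toEuclideanLin (Aᵀ * A) (b j) = μ j • b j := by
    intro j
    apply (WithLp.equiv 2 (n → ℝ)).injective
    ext i
    simp [toEuclideanLin_apply, hbdef, hμdef, hG.mulVec_eigenvectorBasis]
  have hrepr : ∀ (x : EuclideanSpace ℝ n) i,
      b.repr (toEuclideanLin (Aᵀ * A) x) i = μ i * b.repr x i := by
    intro x i
    rw [b.repr_apply_apply, ← hsym (b i) x, hGb i, real_inner_smul_left, ← b.repr_apply_apply]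
  have hquad : ∀ x : EuclideanSpace ℝ n,
      ‖toEuclideanLin A x‖ ^ 2 = ∑ i, μ i * (b.repr x i) ^ 2 := by
    intro x
    rw [normsq_toEL, inner_repr b]
    refine Finset.sum_congr rfl fun i _ => ?_
    rw [hrepr x i]; ring
  have hite : ∀ i j, ⟪b i, b j⟫ = if i = j then 1 else 0 :=
    fun i j => orthonormal_iff_ite.mp b.orthonormal i j
  have hkey : ∀ k : Fin nn, sval A ((k : ℕ) + 1) = Real.sqrt (d k) := by
    intro k
    have hkle : (k : ℕ) ≤ nn := le_of_lt k.isLt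
    apply le_antisymm
    · -- upper bound: approximate by A * P
      set idx : Fin (k : ℕ) → n := fun j => ψ (Fin.castLE hkle j) with hidx
      have hidxinj : Function.Injective idx := ψ.injective.comp (Fin.castLE_injective _)
      set w : Fin (k : ℕ) → EuclideanSpace ℝ n := fun j => b (idx j) with hwdef
      have hwon : Orthonormal ℝ w := b.orthonormal.comp _ hidxinj
      set P : Matrix n n ℝ := ∑ j : Fin (k : ℕ), vecMulVec (w j) (w j) with hPdef
      have hPapp : ∀ x : EuclideanSpace ℝ n,
          toEuclideanLin P x = ∑ j : Fin (k : ℕ), ⟪w j, x⟫ • w j := by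
        intro x
        rw [hPdef, map_sum, LinearMap.sum_apply]
        exact Finset.sum_congr rfl fun j _ => toEL_vecMulVec _ _ _
      have hPrepr : ∀ (x : EuclideanSpace ℝ n) (i : n),
          b.repr (toEuclideanLin P x) i
            = ∑ j : Fin (k : ℕ), ⟪w j, x⟫ * (if i = idx j then 1 else 0) := by
        intro x i
        rw [b.repr_apply_apply, hPapp, inner_sum]
        exact Finset.sum_congr rfl fun j _ => by
          rw [real_inner_smul_right, hwdef, hite]
      have hPin : ∀ (x : EuclideanSpace ℝ n) (j : Fin (k : ℕ)),
          b.repr (toEuclideanLin P x) (idx j) = b.repr x (idx j) := by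
        intro x j
        rw [hPrepr, Finset.sum_eq_single j]
        · rw [if_pos rfl, mul_one, hwdef, ← b.repr_apply_apply]
        · intro j' _ hj'
          rw [if_neg (fun h => hj' (hidxinj h.symm)), mul_zero]
        · intro h; exact absurd (Finset.mem_univ j) h
      have hPout : ∀ (x : EuclideanSpace ℝ n) (i : n), (∀ j, idx j ≠ i) →
          b.repr (toEuclideanLin P x) i = 0 := by
        intro x i hi
        rw [hPrepr]
        exact Finset.sum_eq_zero fun j _ => by rw [if_neg (fun h => hi j h.symm), mul_zero]
      have hrankP : (A * P).rank < (k : ℕ) + 1 := by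
        have h1 : (A * P).rank ≤ P.rank := rank_mul_le_right A P
        have h2 : P.rank ≤ (k : ℕ) := by
          rw [rank_eq_finrank_range_toEL]
          have hle : LinearMap.range (toEuclideanLin P) ≤ Submodule.span ℝ (Set.range w) := by
            rintro _ ⟨x, rfl⟩
            rw [hPapp]
            exact Submodule.sum_mem _ fun j _ =>
              Submodule.smul_mem _ _ (Submodule.subset_span ⟨j, rfl⟩)
          calc finrank ℝ ↥(LinearMap.range (toEuclideanLin P))
              ≤ finrank ℝ ↥(Submodule.span ℝ (Set.range w)) := Submodule.finrank_mono hle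
            _ = (k : ℕ) := by
                rw [finrank_span_eq_card hwon.linearIndependent, Fintype.card_fin]
        omega
      refine le_trans (sval_le_specNorm_sub hrankP) ?_
      apply specNorm_le_bound _ (Real.sqrt_nonneg _)
      intro x
      set y : EuclideanSpace ℝ n := x - toEuclideanLin P x with hydef
      have hyrepr : ∀ i, b.repr y i = b.repr x i - b.repr (toEuclideanLin P x) i := by
        intro i; rw [hydef, map_sub]; rfl
      have hy1 : ∀ j : Fin (k : ℕ), b.repr y (idx j) = 0 := by
        intro j; rw [hyrepr, hPin, sub_self]
      have hy2 : ∀ i, (∀ j, idx j ≠ i) → b.repr y i = b.repr x i := by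
        intro i hi; rw [hyrepr, hPout x i hi, sub_zero]
      have h1 : ‖toEuclideanLin A y‖ ^ 2 ≤ d k * ‖y‖ ^ 2 := by
        rw [hquad y, normsq_repr b y, Finset.mul_sum]
        apply Finset.sum_le_sum
        intro i _
        by_cases hmem : ∃ j, idx j = i
        · obtain ⟨j, rfl⟩ := hmem
          rw [hy1 j]
          simp
        · push_neg at hmem
          have hik : k ≤ ψ.symm i := by
            by_contra hlt
            push_neg at hlt
            apply hmem ⟨(ψ.symm i : ℕ), Fin.lt_def.mp hlt⟩
            show ψ (Fin.castLE hkle ⟨(ψ.symm i : ℕ), Fin.lt_def.mp hlt⟩) = i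
            have h1 : Fin.castLE hkle ⟨(ψ.symm i : ℕ), Fin.lt_def.mp hlt⟩ = ψ.symm i :=
              Fin.ext rfl
            rw [h1, Equiv.apply_symm_apply]
          have : μ i ≤ d k := by
            have := hanti k (ψ.symm i) hik
            simpa [hd, Equiv.apply_symm_apply] using this
          exact mul_le_mul_of_nonneg_right this (sq_nonneg _)
      have h2 : ‖y‖ ^ 2 ≤ ‖x‖ ^ 2 := by
        rw [normsq_repr b y, normsq_repr b x]
        apply Finset.sum_le_sum
        intro i _
        by_cases hmem : ∃ j, idx j = i
        · obtain ⟨j, rfl⟩ := hmem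
          rw [hy1 j]
          simpa using sq_nonneg (b.repr x (idx j))
        · push_neg at hmem
          rw [hy2 i hmem]
      have hAy : toEuclideanLin (A - A * P) x = toEuclideanLin A y := by
        rw [map_sub, LinearMap.sub_apply, hydef, map_sub, toEL_mul]
      rw [hAy]
      calc ‖toEuclideanLin A y‖ = Real.sqrt (‖toEuclideanLin A y‖ ^ 2) :=
            (Real.sqrt_sq (norm_nonneg _)).symm
        _ ≤ Real.sqrt (d k * ‖x‖ ^ 2) := Real.sqrt_le_sqrt
            (h1.trans (mul_le_mul_of_nonneg_left h2 (hd0 k)))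
        _ = Real.sqrt (d k) * ‖x‖ := by
            rw [Real.sqrt_mul (hd0 k), Real.sqrt_sq (norm_nonneg _)]
    · -- lower bound
      apply le_sval (Nat.succ_pos _)
      intro B hB
      set idx : Fin ((k : ℕ) + 1) → n := fun j => ψ (Fin.castLE k.isLt j) with hidx
      have hidxinj : Function.Injective idx := ψ.injective.comp (Fin.castLE_injective _)
      set v : Fin ((k : ℕ) + 1) → EuclideanSpace ℝ n := fun j => b (idx j) with hvdef
      have hvon : Orthonormal ℝ v := b.orthonormal.comp _ hidxinj
      set V := Submodule.span ℝ (Set.range v) with hVdef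
      have hV : finrank ℝ V = (k : ℕ) + 1 := by
        rw [hVdef, finrank_span_eq_card hvon.linearIndependent, Fintype.card_fin]
      set Kr := LinearMap.ker (toEuclideanLin B) with hKrdef
      have hKr : finrank ℝ ↥(LinearMap.range (toEuclideanLin B)) + finrank ℝ Kr = nn := by
        rw [LinearMap.finrank_range_add_finrank_ker]
        exact finrank_euclideanSpace
      obtain ⟨x, hxmem, hx0⟩ : ∃ x, x ∈ V ⊓ Kr ∧ x ≠ 0 := by
        have hsum := Submodule.finrank_sup_add_finrank_inf_eq V Kr
        have hle : finrank ℝ ↥(V ⊔ Kr) ≤ nn :=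
          le_trans (Submodule.finrank_le _) (le_of_eq finrank_euclideanSpace)
        have hrB := (rank_eq_finrank_range_toEL B).symm
        have hlt : 0 < finrank ℝ ↥(V ⊓ Kr) := by omega
        by_contra hcon
        push_neg at hcon
        have hbot : V ⊓ Kr = ⊥ := by
          rw [Submodule.eq_bot_iff]
          exact hcon
        rw [hbot, finrank_bot] at hlt
        omega
      have hcoef : ∀ i, (∀ j, idx j ≠ i) → b.repr x i = 0 := by
        intro i hi
        apply repr_eq_zero_of_mem_span b x (Set.range idx) _ i (fun ⟨j, hj⟩ => hi j hj)
        have hrange : Set.range v = ⇑b '' Set.range idx := by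
          have hv' : v = ⇑b ∘ idx := rfl
          rw [hv', Set.range_comp]
        exact hrange ▸ hxmem.1
      have hxA : d k * ‖x‖ ^ 2 ≤ ‖toEuclideanLin A x‖ ^ 2 := by
        rw [hquad, normsq_repr b, Finset.mul_sum]
        apply Finset.sum_le_sum
        intro i _
        by_cases hmem : ∃ j, idx j = i
        · obtain ⟨j, rfl⟩ := hmem
          have hle' : Fin.castLE k.isLt j ≤ k := by
            rw [Fin.le_def]
            exact Nat.le_of_lt_succ j.isLt
          have : d k ≤ μ (idx j) := by
            have := hanti (Fin.castLE k.isLt j) k hle'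
            simpa [hd, hidx] using this
          exact mul_le_mul_of_nonneg_right this (sq_nonneg _)
        · push_neg at hmem
          rw [hcoef i hmem]
          simp
      have hxB : toEuclideanLin B x = 0 := hxmem.2
      have hAB : toEuclideanLin (A - B) x = toEuclideanLin A x := by
        rw [map_sub, LinearMap.sub_apply, hxB, sub_zero]
      have h1 : Real.sqrt (d k) * ‖x‖ ≤ ‖toEuclideanLin (A - B) x‖ := by
        rw [hAB]
        calc Real.sqrt (d k) * ‖x‖ = Real.sqrt (d k * ‖x‖ ^ 2) := by
              rw [Real.sqrt_mul (hd0 k), Real.sqrt_sq (norm_nonneg _)]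
          _ ≤ Real.sqrt (‖toEuclideanLin A x‖ ^ 2) := Real.sqrt_le_sqrt hxA
          _ = ‖toEuclideanLin A x‖ := Real.sqrt_sq (norm_nonneg _)
      have h2 := norm_toEL_le (A - B) x
      exact le_of_mul_le_mul_right (h1.trans h2) (norm_pos_iff.mpr hx0)
  refine ⟨d, hd0, hkey, ?_⟩
  have hpc : ∏ k, d k = ∏ i, μ i := Equiv.prod_comp ψ μ
  rw [hpc]
  have hdet := hG.det_eq_prod_eigenvalues
  simpa using hdet.symm

theorem vol_eq_sqrt_det (A : Matrix m n ℝ) (h : Fintype.card n ≤ Fintype.card m) :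
    vol A = Real.sqrt (Aᵀ * A).det := by
  obtain ⟨d, hd0, hkey, hprod⟩ := exists_svals A
  rw [vol, min_eq_right h, ← Finset.Ico_add_one_right_eq_Icc, Finset.prod_Ico_eq_prod_range,
    Nat.add_sub_cancel, ← Fin.prod_univ_eq_prod_range (fun i => sval A (1 + i)) (Fintype.card n),
    ← hprod, sqrt_prod _ _ (fun i _ => hd0 i)]
  exact Finset.prod_congr rfl fun k _ => by rw [add_comm, hkey k]

theorem vol_nonneg (A : Matrix m n ℝ) : 0 ≤ vol A :=
  Finset.prod_nonneg fun j _ => sval_nonneg A j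

lemma specNorm_submatrix_le {m₂ : Type*} [Fintype m₂] [DecidableEq m₂]
    (M : Matrix m n ℝ) (f : m₂ → m) (hf : Function.Injective f) :
    specNorm (M.submatrix f _root_.id) ≤ specNorm M := by
  apply specNorm_le_bound _ (specNorm_nonneg M)
  intro x
  refine le_trans ?_ (norm_toEL_le M x)
  have h1 : ∀ i, (toEuclideanLin (M.submatrix f _root_.id) x) i
      = (toEuclideanLin M x) (f i) := fun i => rfl
  rw [EuclideanSpace.norm_eq, EuclideanSpace.norm_eq]
  apply Real.sqrt_le_sqrt
  calc ∑ i, ‖(toEuclideanLin (M.submatrix f _root_.id) x) i‖ ^ 2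
      = ∑ i, ‖(toEuclideanLin M x) (f i)‖ ^ 2 := by
        exact Finset.sum_congr rfl fun i _ => by rw [h1]
    _ = ∑ i ∈ Finset.univ.image f, ‖(toEuclideanLin M x) i‖ ^ 2 :=
        by rw [Finset.sum_image (fun a _ b _ hab => hf hab)]
    _ ≤ ∑ i, ‖(toEuclideanLin M x) i‖ ^ 2 :=
        Finset.sum_le_sum_of_subset_of_nonneg (Finset.subset_univ _)
          (fun i _ _ => by positivity)

lemma rank_submatrix_left_le {m₂ : Type*} [Fintype m₂] [DecidableEq m₂]
    (B : Matrix m n ℝ) (f : m₂ → m) : (B.submatrix f _root_.id).rank ≤ B.rank := by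
  have key := Matrix.submatrix_mul_equiv (1 : Matrix m m ℝ) B f (Equiv.refl m) _root_.id
  have hfact : (1 : Matrix m m ℝ).submatrix f _root_.id * B = B.submatrix f _root_.id := by
    simpa using key
  rw [← hfact]
  exact rank_mul_le_right _ _

lemma sval_submatrix_le {m₂ : Type*} [Fintype m₂] [DecidableEq m₂] (A : Matrix m n ℝ)
    (f : m₂ → m) (hf : Function.Injective f) (j : ℕ) :
    sval (A.submatrix f _root_.id) j ≤ sval A j := by
  rcases Nat.eq_zero_or_pos j with rfl | hj
  · have h1 : {x : ℝ | ∃ B : Matrix m₂ n ℝ, B.rank < 0 ∧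
        x = specNorm (A.submatrix f _root_.id - B)} = ∅ := by ext x; simp
    have h2 : {x : ℝ | ∃ B : Matrix m n ℝ, B.rank < 0 ∧ x = specNorm (A - B)} = ∅ := by
      ext x; simp
    rw [sval, sval, h1, h2]
  · apply le_sval hj
    intro B hB
    have hr : (B.submatrix f _root_.id).rank < j :=
      lt_of_le_of_lt (rank_submatrix_left_le B f) hB
    refine le_trans (sval_le_specNorm_sub hr) ?_
    have hsub : A.submatrix f _root_.id - B.submatrix f _root_.id
        = (A - B).submatrix f _root_.id := rfl
    rw [hsub]
    exact specNorm_submatrix_le (A - B) f hf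

theorem vol_submatrix_le {m₂ : Type*} [Fintype m₂] [DecidableEq m₂] (A : Matrix m n ℝ)
    (f : m₂ → m) (hf : Function.Injective f) (hcard : Fintype.card n ≤ Fintype.card m₂) :
    vol (A.submatrix f _root_.id) ≤ vol A := by
  have hcard2 : Fintype.card m₂ ≤ Fintype.card m := Fintype.card_le_of_injective f hf
  rw [vol, vol, min_eq_right hcard, min_eq_right (hcard.trans hcard2)]
  exact Finset.prod_le_prod (fun j _ => sval_nonneg _ j)
    (fun j _ => sval_submatrix_le A f hf j)


lemma det_tm_nonneg (A : Matrix m n ℝ) : 0 ≤ (Aᵀ * A).det := by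
  have hG : (Aᵀ * A).IsHermitian := by
    rw [← Matrix.conjTranspose_eq_transpose_of_trivial]
    exact Matrix.isHermitian_conjTranspose_mul_self A
  have hPSD : (Aᵀ * A).PosSemidef := by
    rw [← Matrix.conjTranspose_eq_transpose_of_trivial]
    exact Matrix.posSemidef_conjTranspose_mul_self A
  have hdet := hG.det_eq_prod_eigenvalues
  rw [hdet]
  exact Finset.prod_nonneg fun i _ => by exact_mod_cast hPSD.eigenvalues_nonneg i

end SvalAux
end GeneralTheory

namespace KahanAux

variable (m : ℕ) (c s : ℝ)

lemma kahan_S_apply (a b : Fin (m + 1)) :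
    (kahan (m + 2) c s).submatrix Fin.castSucc Fin.succ a b
      = if (a : ℕ) = (b : ℕ) + 1 then c ^ (a : ℕ)
        else if (a : ℕ) ≤ (b : ℕ) then -s * c ^ (a : ℕ) else 0 := by
  have e1 : (Fin.castSucc a = Fin.succ b) ↔ ((a : ℕ) = (b : ℕ) + 1) := by
    rw [Fin.ext_iff]; simp
  have e2 : (Fin.castSucc a < Fin.succ b) ↔ ((a : ℕ) ≤ (b : ℕ)) := by
    rw [Fin.lt_def]; simp [Nat.lt_succ_iff]
  simp only [Matrix.submatrix_apply, kahan, Matrix.of_apply, Fin.coe_castSucc]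
  by_cases h1 : (a : ℕ) = (b : ℕ) + 1
  · rw [if_pos (e1.mpr h1), if_pos h1]
  · rw [if_neg (fun h => h1 (e1.mp h)), if_neg h1]
    by_cases h2 : (a : ℕ) ≤ (b : ℕ)
    · rw [if_pos (e2.mpr h2), if_pos h2]
    · rw [if_neg (fun h => h2 (e2.mp h)), if_neg h2]

lemma kahan_T_apply (a b : Fin (m + 1)) :
    (kahan (m + 2) c s).submatrix Fin.castSucc Fin.castSucc a b
      = if (a : ℕ) = (b : ℕ) then c ^ (a : ℕ)
        else if (a : ℕ) < (b : ℕ) then -s * c ^ (a : ℕ) else 0 := by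
  have e1 : (Fin.castSucc a = Fin.castSucc b) ↔ ((a : ℕ) = (b : ℕ)) := by
    rw [Fin.ext_iff]; simp
  have e2 : (Fin.castSucc a < Fin.castSucc b) ↔ ((a : ℕ) < (b : ℕ)) := by
    rw [Fin.lt_def]; simp
  simp only [Matrix.submatrix_apply, kahan, Matrix.of_apply, Fin.coe_castSucc]
  by_cases h1 : (a : ℕ) = (b : ℕ)
  · rw [if_pos (e1.mpr h1), if_pos h1]
  · rw [if_neg (fun h => h1 (e1.mp h)), if_neg h1]
    by_cases h2 : (a : ℕ) < (b : ℕ)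
    · rw [if_pos (e2.mpr h2), if_pos h2]
    · rw [if_neg (fun h => h2 (e2.mp h)), if_neg h2]

lemma det_T : ((kahan (m + 2) c s).submatrix Fin.castSucc Fin.castSucc).det
    = ∏ i : Fin (m + 1), c ^ (i : ℕ) := by
  rw [Matrix.det_of_upperTriangular]
  · exact Finset.prod_congr rfl fun i _ => by rw [kahan_T_apply, if_pos rfl]
  · intro i j hij
    have hji : (j : ℕ) < (i : ℕ) := hij
    rw [kahan_T_apply, if_neg (by omega), if_neg (by omega)]

/-- The column-operations matrix. -/
noncomputable def E : Matrix (Fin (m + 1)) (Fin (m + 1)) ℝ :=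
  Matrix.of fun k j => (if (k : ℕ) = (j : ℕ) then (1 : ℝ) else 0)
    + (if (k : ℕ) = (j : ℕ) + 1 then -1 else 0)

lemma det_E : (E m).det = 1 := by
  rw [Matrix.det_of_lowerTriangular _ ?ht]
  case ht =>
    intro i j hij
    have hji : (i : ℕ) < (j : ℕ) := hij
    show (if (i : ℕ) = (j : ℕ) then (1 : ℝ) else 0)
      + (if (i : ℕ) = (j : ℕ) + 1 then -1 else 0) = 0
    rw [if_neg (by omega), if_neg (by omega), add_zero]
  · refine Finset.prod_eq_one fun i _ => ?_
    show (if (i : ℕ) = (i : ℕ) then (1 : ℝ) else 0)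
      + (if (i : ℕ) = (i : ℕ) + 1 then -1 else 0) = 1
    rw [if_pos rfl, if_neg (by omega), add_zero]

/-- Result of the column operations. -/
noncomputable def M : Matrix (Fin (m + 1)) (Fin (m + 1)) ℝ :=
  Matrix.of fun i j =>
    if (j : ℕ) = m then -s * c ^ (i : ℕ)
    else if (i : ℕ) = (j : ℕ) + 1 then (1 + s) * c ^ (i : ℕ)
    else if (i : ℕ) = (j : ℕ) + 2 then -(c ^ (i : ℕ)) else 0

lemma SE_eq_M : (kahan (m + 2) c s).submatrix Fin.castSucc Fin.succ * E m = M m c s := by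
  ext i j
  rw [Matrix.mul_apply]
  simp only [E, Matrix.of_apply, mul_add]
  rw [Finset.sum_add_distrib]
  have h1 : ∑ k : Fin (m + 1), (kahan (m + 2) c s).submatrix Fin.castSucc Fin.succ i k *
      (if (k : ℕ) = (j : ℕ) then (1 : ℝ) else 0)
      = (kahan (m + 2) c s).submatrix Fin.castSucc Fin.succ i j := by
    rw [Finset.sum_eq_single j]
    · rw [if_pos rfl, mul_one]
    · intro k _ hk
      rw [if_neg (fun h => hk (Fin.ext h)), mul_zero]
    · intro h; exact absurd (Finset.mem_univ j) h
  rw [h1]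
  by_cases hj : (j : ℕ) = m
  · have h2 : ∑ k : Fin (m + 1), (kahan (m + 2) c s).submatrix Fin.castSucc Fin.succ i k *
        (if (k : ℕ) = (j : ℕ) + 1 then (-1 : ℝ) else 0) = 0 := by
      refine Finset.sum_eq_zero fun k _ => ?_
      rw [if_neg (by omega : ¬ (k : ℕ) = (j : ℕ) + 1), mul_zero]
    rw [h2, add_zero, kahan_S_apply]
    simp only [M, Matrix.of_apply, if_pos hj]
    rw [if_neg (by omega), if_pos (by omega)]
  · have hjm : (j : ℕ) < m := by omega
    set j' : Fin (m + 1) := ⟨(j : ℕ) + 1, by omega⟩ with hj'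
    have h2 : ∑ k : Fin (m + 1), (kahan (m + 2) c s).submatrix Fin.castSucc Fin.succ i k *
        (if (k : ℕ) = (j : ℕ) + 1 then (-1 : ℝ) else 0)
        = -((kahan (m + 2) c s).submatrix Fin.castSucc Fin.succ i j') := by
      rw [Finset.sum_eq_single j']
      · rw [if_pos rfl, mul_neg_one]
      · intro k _ hk
        rw [if_neg (fun h => hk (Fin.ext h)), mul_zero]
      · intro h; exact absurd (Finset.mem_univ j') h
    rw [h2, kahan_S_apply, kahan_S_apply]
    have hj'v : (j' : ℕ) = (j : ℕ) + 1 := rfl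
    simp only [M, Matrix.of_apply, if_neg hj, hj'v]
    split_ifs <;> first | ring1 | (exfalso; first | exact ‹False› | omega)

lemma det_M : (M m c s).det = (-1) ^ m * (-s) * ((1 + s) ^ m * ∏ i : Fin m, c ^ ((i : ℕ) + 1)) := by
  rw [Matrix.det_succ_row_zero]
  rw [Finset.sum_eq_single (Fin.last m)]
  · have h0 : (M m c s) 0 (Fin.last m) = -s := by
      simp only [M, Matrix.of_apply, Fin.val_last, Fin.val_zero]
      norm_num
    rw [h0, Fin.val_last, Fin.succAbove_last]
    have hN : ((M m c s).submatrix Fin.succ Fin.castSucc).det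
        = ∏ i : Fin m, ((1 + s) * c ^ ((i : ℕ) + 1)) := by
      rw [Matrix.det_of_lowerTriangular _ ?ht2]
      case ht2 =>
        intro i j hij
        have hlt : (i : ℕ) < (j : ℕ) := hij
        have hjm : (j : ℕ) < m := j.isLt
        have him : (i : ℕ) < m := i.isLt
        simp only [Matrix.submatrix_apply, M, Matrix.of_apply, Fin.val_succ, Fin.coe_castSucc]
        split_ifs <;> first | ring1 | (exfalso; first | exact ‹False› | omega)
      · refine Finset.prod_congr rfl fun i _ => ?_
        have him : (i : ℕ) < m := i.isLt
        simp only [Matrix.submatrix_apply, M, Matrix.of_apply, Fin.val_succ, Fin.coe_castSucc]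
        split_ifs <;> first | ring1 | (exfalso; first | exact ‹False› | omega)
    rw [hN, Finset.prod_mul_distrib, Finset.prod_const, Finset.card_univ, Fintype.card_fin]
  · intro j _ hj
    have hjm : ¬ ((j : ℕ) = m) := fun h => hj (Fin.ext (by simp [h]))
    have h0 : (M m c s) 0 j = 0 := by
      simp only [M, Matrix.of_apply, Fin.val_zero]
      split_ifs <;> first | rfl | (exfalso; first | exact ‹False› | omega)
    rw [h0]
    ring
  · intro h; exact absurd (Finset.mem_univ _) h

lemma det_S : ((kahan (m + 2) c s).submatrix Fin.castSucc Fin.succ).det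
    = (-1) ^ m * (-s) * ((1 + s) ^ m * ∏ i : Fin m, c ^ ((i : ℕ) + 1)) := by
  have h := congrArg Matrix.det (SE_eq_M m c s)
  rw [Matrix.det_mul, det_E, mul_one] at h
  rw [h, det_M]

lemma prod_shift : ∏ i : Fin (m + 1), c ^ (i : ℕ) = ∏ i : Fin m, c ^ ((i : ℕ) + 1) := by
  rw [Fin.prod_univ_succ]
  simp [Fin.val_succ]

end KahanAux

theorem statement_19 (m : ℕ) (c s : ℝ) (hc : 0 < c) (hs : 0 < s)
    (hcs : c ^ 2 + s ^ 2 = 1) :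
    (s * (1 + s) ^ m * vol ((kahan (m + 2) c s).submatrix id Fin.castSucc) ≤
      vol ((kahan (m + 2) c s).submatrix id Fin.succ)) ∧
    (s ^ 2 * (1 + s) ^ (2 * m) *
        vol (((kahan (m + 2) c s)ᵀ * kahan (m + 2) c s).submatrix
          Fin.castSucc Fin.castSucc) ≤
      vol (((kahan (m + 2) c s)ᵀ * kahan (m + 2) c s).submatrix Fin.succ Fin.succ)) ∧
    (∀ γ : ℝ, 1 ≤ γ → γ < s ^ 2 * (1 + s) ^ (2 * m) →
      ¬ (0 < vol (((kahan (m + 2) c s)ᵀ * kahan (m + 2) c s).submatrix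
            Fin.castSucc Fin.castSucc) ∧
        ∀ (r c' : Fin (m + 1) → Fin (m + 2)),
          DiffOne Fin.castSucc r → DiffOne Fin.castSucc c' →
          vol (((kahan (m + 2) c s)ᵀ * kahan (m + 2) c s).submatrix r c') ≤
            γ * vol (((kahan (m + 2) c s)ᵀ * kahan (m + 2) c s).submatrix
              Fin.castSucc Fin.castSucc))) := by
  classical
  have h1s : (0:ℝ) < 1 + s := by linarith
  set K := kahan (m + 2) c s with hK
  set cN := ∏ i : Fin (m + 1), c ^ (i : ℕ) with hcN
  have hcNpos : 0 < cN := Finset.prod_pos fun i _ => pow_pos hc _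
  have hcard12 : Fintype.card (Fin (m + 1)) ≤ Fintype.card (Fin (m + 2)) := by
    simp only [Fintype.card_fin]; omega
  have hcard11 : Fintype.card (Fin (m + 1)) ≤ Fintype.card (Fin (m + 1)) := le_refl _
  have hlast : ∀ a : Fin (m + 1), K (Fin.last (m + 1)) (Fin.castSucc a) = 0 := by
    intro a
    have h1 : ¬(Fin.last (m + 1) = Fin.castSucc a) := by
      rw [Fin.ext_iff]; simp only [Fin.val_last, Fin.coe_castSucc]; omega
    have h2 : ¬(Fin.last (m + 1) < Fin.castSucc a) := by
      rw [Fin.lt_def]; simp only [Fin.val_last, Fin.coe_castSucc]; omega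
    rw [hK]
    simp only [kahan, Matrix.of_apply]
    rw [if_neg h1, if_neg h2]
  have hB1 : (K.submatrix _root_.id Fin.castSucc)ᵀ * (K.submatrix _root_.id Fin.castSucc)
      = (K.submatrix Fin.castSucc Fin.castSucc)ᵀ * (K.submatrix Fin.castSucc Fin.castSucc) := by
    ext i j
    simp only [Matrix.mul_apply, Matrix.transpose_apply, Matrix.submatrix_apply, id_eq]
    rw [Fin.sum_univ_castSucc (f := fun k => K k (Fin.castSucc i) * K k (Fin.castSucc j))]
    rw [hlast i, zero_mul, add_zero]
  have hKK : ∀ e f : Fin (m + 1) → Fin (m + 2),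
      (Kᵀ * K).submatrix e f = (K.submatrix _root_.id e)ᵀ * (K.submatrix _root_.id f) := by
    intro e f
    ext i j
    simp only [Matrix.mul_apply, Matrix.submatrix_apply, Matrix.transpose_apply, id_eq]
  have hdT : (K.submatrix Fin.castSucc Fin.castSucc).det = cN := KahanAux.det_T m c s
  have hdS : (K.submatrix Fin.castSucc Fin.succ).det
      = (-1) ^ m * (-s) * ((1 + s) ^ m * cN) := by
    rw [hK, KahanAux.det_S m c s, hcN, KahanAux.prod_shift m c]
  have hvolB1 : vol (K.submatrix _root_.id Fin.castSucc) = cN := by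
    rw [SvalAux.vol_eq_sqrt_det _ hcard12, hB1, Matrix.det_mul, Matrix.det_transpose, hdT]
    exact Real.sqrt_mul_self hcNpos.le
  have hvolS : vol (K.submatrix Fin.castSucc Fin.succ) = s * ((1 + s) ^ m * cN) := by
    rw [SvalAux.vol_eq_sqrt_det _ hcard11, Matrix.det_mul, Matrix.det_transpose, hdS,
      Real.sqrt_mul_self_eq_abs]
    rw [abs_mul, abs_mul, abs_pow, abs_neg, abs_one, one_pow, one_mul, abs_neg,
      abs_of_pos hs, abs_of_pos (by positivity)]
  have hSB2 : (K.submatrix _root_.id Fin.succ).submatrix Fin.castSucc _root_.id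
      = K.submatrix Fin.castSucc Fin.succ := by
    rw [Matrix.submatrix_submatrix]
    rfl
  have hvolB2ge : s * ((1 + s) ^ m * cN) ≤ vol (K.submatrix _root_.id Fin.succ) := by
    rw [← hvolS, ← hSB2]
    exact SvalAux.vol_submatrix_le _ Fin.castSucc (Fin.castSucc_injective _)
      (by simp only [Fintype.card_fin]; omega)
  have part1 : s * (1 + s) ^ m * vol (K.submatrix _root_.id Fin.castSucc)
      ≤ vol (K.submatrix _root_.id Fin.succ) := by
    rw [hvolB1]
    calc s * (1 + s) ^ m * cN = s * ((1 + s) ^ m * cN) := by ring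
    _ ≤ _ := hvolB2ge
  have hdetG1 : ((K.submatrix _root_.id Fin.castSucc)ᵀ
      * (K.submatrix _root_.id Fin.castSucc)).det = cN ^ 2 := by
    rw [hB1, Matrix.det_mul, Matrix.det_transpose, hdT]; ring
  have httr1 : ((K.submatrix _root_.id Fin.castSucc)ᵀ * K.submatrix _root_.id Fin.castSucc)ᵀ
      = (K.submatrix _root_.id Fin.castSucc)ᵀ * K.submatrix _root_.id Fin.castSucc := by
    rw [Matrix.transpose_mul, Matrix.transpose_transpose]
  have httr2 : ((K.submatrix _root_.id Fin.succ)ᵀ * K.submatrix _root_.id Fin.succ)ᵀ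
      = (K.submatrix _root_.id Fin.succ)ᵀ * K.submatrix _root_.id Fin.succ := by
    rw [Matrix.transpose_mul, Matrix.transpose_transpose]
  have hvolG1 : vol ((Kᵀ * K).submatrix Fin.castSucc Fin.castSucc) = cN ^ 2 := by
    rw [hKK, SvalAux.vol_eq_sqrt_det _ hcard11, httr1, Matrix.det_mul, hdetG1]
    calc Real.sqrt (cN ^ 2 * cN ^ 2) = Real.sqrt (cN ^ 2 * cN ^ 2) := rfl
    _ = cN ^ 2 := Real.sqrt_mul_self (by positivity)
  have hdetG2nn : 0 ≤ ((K.submatrix _root_.id Fin.succ)ᵀ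
      * (K.submatrix _root_.id Fin.succ)).det := SvalAux.det_tm_nonneg _
  have hvolB2sq : vol ((Kᵀ * K).submatrix Fin.succ Fin.succ)
      = (vol (K.submatrix _root_.id Fin.succ)) ^ 2 := by
    rw [hKK, SvalAux.vol_eq_sqrt_det _ hcard11, httr2, Matrix.det_mul,
      Real.sqrt_mul_self_eq_abs, abs_of_nonneg hdetG2nn,
      SvalAux.vol_eq_sqrt_det _ hcard12, Real.sq_sqrt hdetG2nn]
  have part2 : s ^ 2 * (1 + s) ^ (2 * m) * vol ((Kᵀ * K).submatrix Fin.castSucc Fin.castSucc)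
      ≤ vol ((Kᵀ * K).submatrix Fin.succ Fin.succ) := by
    rw [hvolG1, hvolB2sq]
    have hpos0 : 0 ≤ s * ((1 + s) ^ m * cN) := by positivity
    have hsq := pow_le_pow_left₀ hpos0 hvolB2ge 2
    calc s ^ 2 * (1 + s) ^ (2 * m) * cN ^ 2 = (s * ((1 + s) ^ m * cN)) ^ 2 := by
          rw [show 2 * m = m * 2 from mul_comm 2 m, pow_mul]; ring
    _ ≤ _ := hsq
  refine ⟨part1, part2, ?_⟩
  intro γ hγ1 hγlt h
  obtain ⟨hpos, hmax⟩ := h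
  have hd1 : DiffOne (Fin.castSucc : Fin (m + 1) → Fin (m + 2)) Fin.succ := by
    refine ⟨Fin.succ_injective _, ?_⟩
    have hsub : Finset.univ.image (Fin.succ : Fin (m + 1) → Fin (m + 2))
        \ Finset.univ.image Fin.castSucc ⊆ {Fin.last (m + 1)} := by
      intro x hx
      rw [Finset.mem_sdiff] at hx
      rcases eq_or_ne x (Fin.last (m + 1)) with hxe | hxe
      · simp [hxe]
      · obtain ⟨y, hy⟩ := Fin.exists_castSucc_eq.mpr hxe
        exact absurd (Finset.mem_image.mpr ⟨y, Finset.mem_univ y, hy⟩) hx.2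
    exact le_trans (Finset.card_le_card hsub) (by simp)
  have hineq := hmax Fin.succ Fin.succ hd1 hd1
  have hlt : γ * vol ((Kᵀ * K).submatrix Fin.castSucc Fin.castSucc)
      < s ^ 2 * (1 + s) ^ (2 * m) * vol ((Kᵀ * K).submatrix Fin.castSucc Fin.castSucc) :=
    mul_lt_mul_of_pos_right hγlt hpos
  linarith
end
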